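/- arXiv:1502.05732 — 10 statements merged into one kernel-verified Lean document; each statement's English description precedes it below -/
import Mathlib

section
/- For every measurable function f : (0,∞) → [0,∞] and every x > 0 one has the identities Cf(x) + C*f(x) = C*(Cf)(x) and Cf(x) + C*f(x) = C(C*f)(x), where all integrals are taken in the extended nonnegative reals. -/
open MeasureTheory Set
open scoped ENNReal

/-- The Cesàro operator `Cf(x) = (1/x)∫_0^x f(t) dt`, with values in `[0,∞]`. -/
noncomputable def cesaro (f : ℝ → ENNReal) (x : ℝ) : ENNReal :=
  (∫⁻ t in Set.Ioo 0 x, f t) / ENNReal.ofReal x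

/-- The Copson operator `C*f(x) = ∫_x^∞ f(t)/t dt`, with values in `[0,∞]`. -/
noncomputable def copson (f : ℝ → ENNReal) (x : ℝ) : ENNReal :=
  ∫⁻ t in Set.Ioi x, f t / ENNReal.ofReal t

lemma key_inv_sq (a : ℝ) (ha : 0 < a) :
    ∫⁻ t in Ioi a, (ENNReal.ofReal t)⁻¹ * (ENNReal.ofReal t)⁻¹ = (ENNReal.ofReal a)⁻¹ := by
  have h1 : ∀ t ∈ Ioi a, (ENNReal.ofReal t)⁻¹ * (ENNReal.ofReal t)⁻¹
      = ENNReal.ofReal (t ^ (-2 : ℝ)) := by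
    intro t ht
    have ht0 : (0 : ℝ) < t := ha.trans ht
    have : t ^ (-2 : ℝ) = t⁻¹ * t⁻¹ := by
      rw [show (-2 : ℝ) = -(2:ℕ) by norm_num, Real.rpow_neg ht0.le, Real.rpow_natCast]
      rw [pow_two, mul_inv]
    rw [this, ENNReal.ofReal_mul (by positivity), ENNReal.ofReal_inv_of_pos ht0]
  rw [setLIntegral_congr_fun measurableSet_Ioi h1,
    ← ofReal_integral_eq_lintegral_ofReal (integrableOn_Ioi_rpow_of_lt (by norm_num) ha)
      (ae_restrict_of_forall_mem measurableSet_Ioi fun t ht => Real.rpow_nonneg (ha.trans ht).le _),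
    integral_Ioi_rpow_of_lt (by norm_num) ha]
  norm_num
  rw [Real.rpow_neg_one, ENNReal.ofReal_inv_of_pos ha]

/-- For every measurable `f : (0,∞) → [0,∞]` and every `x > 0` one has
`Cf(x) + C*f(x) = C*(Cf)(x)` and `Cf(x) + C*f(x) = C(C*f)(x)`. -/
theorem stmt1 (f : ℝ → ENNReal) (hf : Measurable f) (x : ℝ) (hx : 0 < x) :
    cesaro f x + copson f x = copson (cesaro f) x ∧
    cesaro f x + copson f x = cesaro (copson f) x := by
  have hx0 : ENNReal.ofReal x ≠ 0 := by simp [hx]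
  have hxt : ENNReal.ofReal x ≠ ⊤ := ENNReal.ofReal_ne_top
  set g : ℝ → ℝ≥0∞ := fun t => (ENNReal.ofReal t)⁻¹ * (ENNReal.ofReal t)⁻¹ with hg
  have hgm : Measurable g := ENNReal.measurable_ofReal.inv.mul ENNReal.measurable_ofReal.inv
  constructor
  · -- first identity
    symm
    have step1 : ∀ t ∈ Ioi x, cesaro f t / ENNReal.ofReal t
        = ∫⁻ s in Ioi 0, (Iio t).indicator f s * g t := by
      intro t ht
      rw [lintegral_mul_const _ (hf.indicator measurableSet_Iio),
        lintegral_indicator measurableSet_Iio, Measure.restrict_restrict measurableSet_Iio,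
        Iio_inter_Ioi]
      simp only [cesaro, hg, div_eq_mul_inv, mul_assoc]
    have hmeas : AEMeasurable (fun z : ℝ × ℝ => (Iio z.1).indicator f z.2 * g z.1)
        ((volume.restrict (Ioi x)).prod (volume.restrict (Ioi 0))) := by
      apply Measurable.aemeasurable
      have : (fun z : ℝ × ℝ => (Iio z.1).indicator f z.2)
          = {z : ℝ × ℝ | z.2 < z.1}.indicator (fun z => f z.2) := by
        ext z; by_cases h : z.2 < z.1 <;> simp [indicator, h]
      exact (this ▸ (hf.comp measurable_snd).indicator
        (measurableSet_lt measurable_snd measurable_fst)).mul (hgm.comp measurable_fst)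
    have step2 : ∀ s ∈ Ioi (0:ℝ), (∫⁻ t in Ioi x, (Iio t).indicator f s * g t)
        = f s * (ENNReal.ofReal (max x s))⁻¹ := by
      intro s hs
      have heq : ∀ t, (Iio t).indicator f s * g t
          = (Ioi s).indicator (fun t => f s * g t) t := by
        intro t; by_cases h : s < t <;> simp [indicator, h]
      simp_rw [heq]
      rw [lintegral_indicator measurableSet_Ioi, Measure.restrict_restrict measurableSet_Ioi,
        Ioi_inter_Ioi, lintegral_const_mul _ hgm, sup_comm,
        key_inv_sq _ (lt_max_iff.mpr (Or.inl hx))]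
    rw [copson, setLIntegral_congr_fun measurableSet_Ioi step1,
      lintegral_lintegral_swap hmeas,
      setLIntegral_congr_fun measurableSet_Ioi step2,
      ← Ioc_union_Ioi_eq_Ioi hx.le, lintegral_union measurableSet_Ioi Ioc_disjoint_Ioi_same]
    congr 1
    · have : ∀ s ∈ Ioc 0 x, f s * (ENNReal.ofReal (max x s))⁻¹
          = f s * (ENNReal.ofReal x)⁻¹ := fun s hs => by rw [max_eq_left hs.2]
      rw [setLIntegral_congr_fun measurableSet_Ioc this,
        lintegral_mul_const _ hf, cesaro, div_eq_mul_inv,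
        Measure.restrict_congr_set Ioo_ae_eq_Ioc]
    · rw [copson]
      refine setLIntegral_congr_fun measurableSet_Ioi (fun s hs => ?_)
      rw [max_eq_right (le_of_lt hs), div_eq_mul_inv]
  · -- second identity
    symm
    have step1 : ∀ t ∈ Ioo 0 x, copson f t
        = ∫⁻ s in Ioi 0, (Ioi t).indicator (fun s => f s / ENNReal.ofReal s) s := by
      intro t ht
      rw [lintegral_indicator measurableSet_Ioi, Measure.restrict_restrict measurableSet_Ioi,
        inter_eq_left.mpr (Ioi_subset_Ioi ht.1.le), copson]
    have hmeas : AEMeasurable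
        (fun z : ℝ × ℝ => (Ioi z.1).indicator (fun s => f s / ENNReal.ofReal s) z.2)
        ((volume.restrict (Ioo 0 x)).prod (volume.restrict (Ioi 0))) := by
      apply Measurable.aemeasurable
      have : (fun z : ℝ × ℝ => (Ioi z.1).indicator (fun s => f s / ENNReal.ofReal s) z.2)
          = {z : ℝ × ℝ | z.1 < z.2}.indicator (fun z => f z.2 / ENNReal.ofReal z.2) := by
        ext z; by_cases h : z.1 < z.2 <;> simp [indicator, h]
      exact this ▸ ((hf.comp measurable_snd).div
        (ENNReal.measurable_ofReal.comp measurable_snd)).indicator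
        (measurableSet_lt measurable_fst measurable_snd)
    have step2 : ∀ s ∈ Ioi (0:ℝ),
        (∫⁻ t in Ioo 0 x, (Ioi t).indicator (fun s => f s / ENNReal.ofReal s) s)
        = f s / ENNReal.ofReal s * ENNReal.ofReal (min x s) := by
      intro s hs
      have heq : ∀ t, (Ioi t).indicator (fun s => f s / ENNReal.ofReal s) s
          = (Iio s).indicator (fun _ => f s / ENNReal.ofReal s) t := by
        intro t; by_cases h : t < s <;> simp [indicator, h]
      simp_rw [heq]
      rw [lintegral_indicator_const measurableSet_Iio,
        Measure.restrict_apply measurableSet_Iio]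
      have : Iio s ∩ Ioo 0 x = Ioo 0 (min x s) := by
        ext t; simp only [mem_inter_iff, mem_Iio, mem_Ioo, lt_min_iff]; tauto
      rw [this, Real.volume_Ioo, sub_zero]
    rw [cesaro, setLIntegral_congr_fun measurableSet_Ioo step1,
      lintegral_lintegral_swap hmeas,
      setLIntegral_congr_fun measurableSet_Ioi step2,
      ← Ioc_union_Ioi_eq_Ioi hx.le, lintegral_union measurableSet_Ioi Ioc_disjoint_Ioi_same,
      ENNReal.add_div]
    congr 1
    · have : ∀ s ∈ Ioc 0 x, f s / ENNReal.ofReal s * ENNReal.ofReal (min x s) = f s := by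
        intro s hs
        rw [min_eq_right hs.2, ENNReal.div_mul_cancel (by simp [hs.1]) ENNReal.ofReal_ne_top]
      rw [setLIntegral_congr_fun measurableSet_Ioc this, cesaro,
        Measure.restrict_congr_set Ioo_ae_eq_Ioc]
    · have : ∀ s ∈ Ioi x, f s / ENNReal.ofReal s * ENNReal.ofReal (min x s)
          = f s / ENNReal.ofReal s * ENNReal.ofReal x := fun s hs => by
        rw [min_eq_left (le_of_lt hs)]
      rw [setLIntegral_congr_fun measurableSet_Ioi this,
        lintegral_mul_const _ (f := fun s => f s / ENNReal.ofReal s) (hf.div ENNReal.measurable_ofReal), ← copson,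
        div_eq_mul_inv, mul_assoc, ← div_eq_mul_inv, ENNReal.div_self hx0 hxt, mul_one]
end

section
/- Let f : (0,1) → [0,∞) be Lebesgue integrable. Then for every x ∈ (0,1) one has C*(Cf)(x) = Cf(x) + C*f(x) − ∫_0^1 f(t) dt, where on (0,1) the operators are Cf(x) = (1/x)∫_0^x f(t) dt and C*f(x) = ∫_x^1 f(t)/t dt. -/
open MeasureTheory Set

noncomputable def cesaro01 (f : ℝ → ℝ) (x : ℝ) : ℝ :=
  (1 / x) * ∫ t in Set.Ioo 0 x, f t

noncomputable def copson01 (f : ℝ → ℝ) (x : ℝ) : ℝ :=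
  ∫ t in Set.Ioo x 1, f t / t

lemma invsq_integral {m : ℝ} (hm : 0 < m) (hm1 : m ≤ 1) :
    ∫ t in Ioo m 1, (t ^ 2)⁻¹ = m⁻¹ - 1 := by
  rw [← integral_Ioc_eq_integral_Ioo, ← intervalIntegral.integral_of_le hm1]
  have h0 : (0 : ℝ) ∉ Set.uIcc m 1 := by
    rw [Set.uIcc_of_le hm1]
    intro h
    exact absurd h.1 (by linarith)
  have h := integral_zpow (a := m) (b := 1) (n := -2) (Or.inr ⟨by norm_num, h0⟩)
  have he : ∀ t : ℝ, t ^ (-2 : ℤ) = (t ^ 2)⁻¹ := fun t => by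
    rw [zpow_neg]; norm_cast
  simp_rw [he] at h
  rw [h]
  norm_num
  ring

/-- For `f : (0,1) → [0,∞)` Lebesgue integrable and `x ∈ (0,1)`,
`C*(Cf)(x) = Cf(x) + C*f(x) − ∫_0^1 f(t) dt`. -/
theorem stmt2 (f : ℝ → ℝ) (hf : IntegrableOn f (Set.Ioo 0 1))
    (hf0 : ∀ t ∈ Set.Ioo (0:ℝ) 1, 0 ≤ f t)
    (x : ℝ) (hx : x ∈ Set.Ioo (0:ℝ) 1) :
    copson01 (cesaro01 f) x = cesaro01 f x + copson01 f x - ∫ t in Set.Ioo (0:ℝ) 1, f t := by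
  clear hf0
  obtain ⟨hx0, hx1⟩ := hx
  have hfm : AEStronglyMeasurable f (volume.restrict (Ioo (0:ℝ) 1)) := hf.aestronglyMeasurable
  have hSmeas : MeasurableSet {z : ℝ × ℝ | z.2 ∈ Ioo 0 z.1} := by
    have : {z : ℝ × ℝ | z.2 ∈ Ioo 0 z.1}
        = {z : ℝ × ℝ | (0:ℝ) < z.2} ∩ {z : ℝ × ℝ | z.2 < z.1} := by
      ext z; simp [Set.mem_Ioo]
    rw [this]
    exact (measurableSet_lt measurable_const measurable_snd).inter
      (measurableSet_lt measurable_snd measurable_fst)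
  have hker : Integrable (Function.uncurry fun t s => (Ioo (0:ℝ) t).indicator f s / t ^ 2)
      ((volume.restrict (Ioo x 1)).prod (volume.restrict (Ioo (0:ℝ) 1))) := by
    have hfun : (Function.uncurry fun t s => (Ioo (0:ℝ) t).indicator f s / t ^ 2)
        = fun z : ℝ × ℝ =>
            ({z : ℝ × ℝ | z.2 ∈ Ioo 0 z.1}.indicator (fun z => f z.2) z) / z.1 ^ 2 := by
      funext z
      simp only [Function.uncurry, Set.indicator_apply, Set.mem_setOf_eq, Set.mem_Ioo]
    have hmeas : AEStronglyMeasurable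
        (Function.uncurry fun t s => (Ioo (0:ℝ) t).indicator f s / t ^ 2)
        ((volume.restrict (Ioo x 1)).prod (volume.restrict (Ioo (0:ℝ) 1))) := by
      rw [hfun]
      have h1 : AEStronglyMeasurable (fun z : ℝ × ℝ => f z.2)
          ((volume.restrict (Ioo x 1)).prod (volume.restrict (Ioo (0:ℝ) 1))) := hfm.comp_snd
      have h2 := h1.indicator hSmeas
      exact (h2.aemeasurable.div
        ((measurable_fst.pow_const 2).aemeasurable)).aestronglyMeasurable
    refine Integrable.mono' (g := fun z : ℝ × ℝ => (1:ℝ) * ((x ^ 2)⁻¹ * ‖f z.2‖)) ?_ hmeas ?_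
    · exact Integrable.mul_prod
        ((integrableOn_const_iff (C := (1:ℝ))).2 (Or.inr measure_Ioo_lt_top))
        (hf.norm.const_mul _)
    · rw [Measure.prod_restrict]
      filter_upwards [ae_restrict_mem (measurableSet_Ioo.prod measurableSet_Ioo)] with z hz
      obtain ⟨⟨hz1, hz2⟩, -⟩ := hz
      have ht0 : 0 < z.1 := lt_trans hx0 hz1
      simp only [Function.uncurry, one_mul, norm_div, norm_pow, Real.norm_eq_abs,
        abs_of_pos ht0]
      have hle : |(Ioo (0:ℝ) z.1).indicator f z.2| ≤ |f z.2| := by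
        simpa using norm_indicator_le_norm_self f z.2
      have hx2 : x ^ 2 ≤ z.1 ^ 2 := by nlinarith
      calc |(Ioo (0:ℝ) z.1).indicator f z.2| / z.1 ^ 2
          ≤ |f z.2| / x ^ 2 := div_le_div₀ (abs_nonneg _) hle (by positivity) hx2
        _ = (x ^ 2)⁻¹ * |f z.2| := by rw [div_eq_mul_inv, mul_comm]
  -- Step B: rewrite LHS as a double integral
  have hB : copson01 (cesaro01 f) x
      = ∫ t in Ioo x 1, ∫ s in Ioo (0:ℝ) 1, (Ioo (0:ℝ) t).indicator f s / t ^ 2 := by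
    unfold copson01
    refine setIntegral_congr_fun measurableSet_Ioo fun t ht => ?_
    obtain ⟨htx, ht1⟩ := ht
    have ht0 : 0 < t := lt_trans hx0 htx
    rw [integral_div, setIntegral_indicator measurableSet_Ioo,
      Set.inter_eq_self_of_subset_right (Ioo_subset_Ioo_right ht1.le)]
    unfold cesaro01
    rw [one_div, inv_mul_eq_div, div_div, ← sq]
  -- Step C: Fubini
  rw [hB, integral_integral_swap hker]
  -- Step D: compute the inner integral
  have hD : ∀ s ∈ Ioo (0:ℝ) 1, (∫ t in Ioo x 1, (Ioo (0:ℝ) t).indicator f s / t ^ 2)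
      = f s * ((max x s)⁻¹ - 1) := by
    intro s hs
    obtain ⟨hs0, hs1⟩ := hs
    have h1 : ∀ t : ℝ, (Ioo (0:ℝ) t).indicator f s / t ^ 2
        = (Ioi s).indicator (fun t => f s * (t ^ 2)⁻¹) t := by
      intro t
      by_cases h : s < t
      · rw [Set.indicator_of_mem (Set.mem_Ioo.2 ⟨hs0, h⟩) f,
          Set.indicator_of_mem (Set.mem_Ioi.2 h), div_eq_mul_inv]
      · rw [Set.indicator_of_notMem (fun hh => h (Set.mem_Ioo.1 hh).2) f,
          Set.indicator_of_notMem (fun hh => h (Set.mem_Ioi.1 hh)), zero_div]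
    simp_rw [h1]
    rw [setIntegral_indicator measurableSet_Ioi, Set.Ioo_inter_Ioi,
      integral_const_mul, invsq_integral (lt_max_of_lt_left hx0) (max_le hx1.le hs1.le)]
  rw [setIntegral_congr_fun measurableSet_Ioo hD]
  -- Step E: split the integral at x
  have hsplit : ∀ g : ℝ → ℝ, IntegrableOn g (Ioo (0:ℝ) x) → IntegrableOn g (Ioo x 1) →
      ∫ s in Ioo (0:ℝ) 1, g s = (∫ s in Ioo (0:ℝ) x, g s) + ∫ s in Ioo x 1, g s := by
    intro g h1 h2
    rw [← integral_Ioc_eq_integral_Ioo (x := (0:ℝ)) (y := 1),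
      ← Set.Ioc_union_Ioc_eq_Ioc hx0.le hx1.le,
      setIntegral_union (Set.Ioc_disjoint_Ioc_of_le le_rfl) measurableSet_Ioc
        ((integrableOn_Ioc_iff_integrableOn_Ioo).2 h1)
        ((integrableOn_Ioc_iff_integrableOn_Ioo).2 h2),
      integral_Ioc_eq_integral_Ioo, integral_Ioc_eq_integral_Ioo]
  have hf1 : IntegrableOn f (Ioo (0:ℝ) x) := hf.mono_set (Ioo_subset_Ioo_right hx1.le)
  have hf2 : IntegrableOn f (Ioo x 1) := hf.mono_set (Ioo_subset_Ioo_left hx0.le)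
  have hfi2 : IntegrableOn (fun s => f s * (s⁻¹ - 1)) (Ioo x 1) := by
    refine Integrable.mono' (g := fun s => ‖f s‖ * (x⁻¹ + 1)) (hf2.norm.mul_const _)
      (hf2.aestronglyMeasurable.mul
        ((measurable_inv.sub measurable_const).aestronglyMeasurable)) ?_
    filter_upwards [ae_restrict_mem measurableSet_Ioo] with s hs
    obtain ⟨hsx, hs1⟩ := hs
    have hs0 : 0 < s := lt_trans hx0 hsx
    rw [norm_mul]
    apply mul_le_mul_of_nonneg_left ?_ (norm_nonneg _) |>.trans_eq rfl
    rw [Real.norm_eq_abs]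
    have h1 : s⁻¹ ≤ x⁻¹ := inv_anti₀ hx0 hsx.le
    have h2 : (0:ℝ) < s⁻¹ := by positivity
    rw [abs_le]
    constructor <;> nlinarith
  have hg1 : IntegrableOn (fun s => f s * ((max x s)⁻¹ - 1)) (Ioo (0:ℝ) x) := by
    refine IntegrableOn.congr_fun (hf1.mul_const (x⁻¹ - 1)) (fun s hs => ?_) measurableSet_Ioo
    rw [max_eq_left hs.2.le]
  have hg2 : IntegrableOn (fun s => f s * ((max x s)⁻¹ - 1)) (Ioo x 1) := by
    refine IntegrableOn.congr_fun hfi2 (fun s hs => ?_) measurableSet_Ioo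
    rw [max_eq_right hs.1.le]
  rw [hsplit _ hg1 hg2, hsplit f hf1 hf2]
  have e1 : ∫ s in Ioo (0:ℝ) x, f s * ((max x s)⁻¹ - 1)
      = (∫ s in Ioo (0:ℝ) x, f s) * (x⁻¹ - 1) := by
    rw [← integral_mul_const]
    exact setIntegral_congr_fun measurableSet_Ioo fun s hs => by rw [max_eq_left hs.2.le]
  have e2 : ∫ s in Ioo x 1, f s * ((max x s)⁻¹ - 1)
      = (∫ s in Ioo x 1, f s / s) - ∫ s in Ioo x 1, f s := by
    have : ∫ s in Ioo x 1, f s * ((max x s)⁻¹ - 1) = ∫ s in Ioo x 1, (f s / s - f s) := by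
      refine setIntegral_congr_fun measurableSet_Ioo fun s hs => ?_
      rw [max_eq_right hs.1.le, mul_sub, mul_one, div_eq_mul_inv]
    have hdiv : IntegrableOn (fun s => f s / s) (Ioo x 1) :=
      IntegrableOn.congr_fun (hfi2.add hf2)
        (fun s hs => by simp only [Pi.add_apply]; rw [div_eq_mul_inv]; ring) measurableSet_Ioo
    rw [this, integral_sub hdiv hf2]
  rw [e1, e2]
  unfold cesaro01 copson01
  ring
end

section
/- Let 1 < p < ∞ and let f : (0,1) → ℝ be measurable. Then C*|f| ∈ L^p(0,1) if and only if both C|f| ∈ L^p(0,1) and f ∈ L^1(0,1). (That is, the Copson space C*(L^p)[0,1] coincides with C(L^p)[0,1] ∩ L^1[0,1].) -/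
open MeasureTheory Set

/-- The Cesàro operator on `(0,1)` applied to `|f|`, with values in `[0,∞]`. -/
noncomputable def cesaroAbs (f : ℝ → ℝ) (x : ℝ) : ENNReal :=
  (∫⁻ t in Set.Ioo 0 x, ENNReal.ofReal |f t|) / ENNReal.ofReal x

/-- The Copson operator on `(0,1)` applied to `|f|`, with values in `[0,∞]`. -/
noncomputable def copsonAbs (f : ℝ → ℝ) (x : ℝ) : ENNReal :=
  ∫⁻ t in Set.Ioo x 1, ENNReal.ofReal |f t| / ENNReal.ofReal t

namespace CopsonAux

open ENNReal

lemma ofReal_rpow_mul {t : ℝ} (ht : 0 < t) (u v : ℝ) :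
    ENNReal.ofReal (t ^ u) * ENNReal.ofReal (t ^ v) = ENNReal.ofReal (t ^ (u + v)) := by
  rw [← ENNReal.ofReal_mul (Real.rpow_nonneg ht.le u), ← Real.rpow_add ht]

lemma measurable_rpow_const (c : ℝ) : Measurable fun t : ℝ => t ^ c :=
  measurable_id.pow measurable_const

/-- Exact power integral over `Ioo a 1`. -/
lemma lint_rpow_hi {c a : ℝ} (hc : c ≠ -1) (ha : 0 < a) (ha1 : a ≤ 1) :
    ∫⁻ t in Ioo a 1, ENNReal.ofReal (t ^ c) = ENNReal.ofReal ((1 - a ^ (c + 1)) / (c + 1)) := by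
  have hmem : (0:ℝ) ∉ Set.uIcc a 1 := by
    rw [uIcc_of_le ha1]; rintro ⟨h0, _⟩; linarith
  have hi : IntervalIntegrable (fun t : ℝ => t ^ c) volume a 1 :=
    intervalIntegral.intervalIntegrable_rpow (Or.inr hmem)
  have hioc : IntegrableOn (fun t : ℝ => t ^ c) (Ioc a 1) volume := by
    rw [← intervalIntegrable_iff_integrableOn_Ioc_of_le ha1]
    exact hi
  have hnn : 0 ≤ᵐ[volume.restrict (Ioc a 1)] fun t : ℝ => t ^ c := by
    filter_upwards [ae_restrict_mem measurableSet_Ioc] with t ht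
    exact Real.rpow_nonneg (le_of_lt (lt_of_lt_of_le ha ht.1.le)) _
  calc ∫⁻ t in Ioo a 1, ENNReal.ofReal (t ^ c)
      = ∫⁻ t in Ioc a 1, ENNReal.ofReal (t ^ c) := setLIntegral_congr Ioo_ae_eq_Ioc
    _ = ENNReal.ofReal (∫ t in Ioc a 1, t ^ c) :=
        (ofReal_integral_eq_lintegral_ofReal hioc hnn).symm
    _ = ENNReal.ofReal ((1 - a ^ (c + 1)) / (c + 1)) := by
        rw [← intervalIntegral.integral_of_le ha1,
          integral_rpow (Or.inr ⟨hc, hmem⟩), Real.one_rpow]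

/-- Exact power integral over `Ioo 0 x`. -/
lemma lint_rpow_lo {c x : ℝ} (hc : -1 < c) (hx : 0 < x) :
    ∫⁻ t in Ioo 0 x, ENNReal.ofReal (t ^ c) = ENNReal.ofReal (x ^ (c + 1) / (c + 1)) := by
  have hi : IntervalIntegrable (fun t : ℝ => t ^ c) volume 0 x :=
    intervalIntegral.intervalIntegrable_rpow' hc
  have hioc : IntegrableOn (fun t : ℝ => t ^ c) (Ioc 0 x) volume := by
    rw [← intervalIntegrable_iff_integrableOn_Ioc_of_le hx.le]
    exact hi
  have hnn : 0 ≤ᵐ[volume.restrict (Ioc 0 x)] fun t : ℝ => t ^ c := by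
    filter_upwards [ae_restrict_mem measurableSet_Ioc] with t ht
    exact Real.rpow_nonneg ht.1.le _
  calc ∫⁻ t in Ioo 0 x, ENNReal.ofReal (t ^ c)
      = ∫⁻ t in Ioc 0 x, ENNReal.ofReal (t ^ c) := setLIntegral_congr Ioo_ae_eq_Ioc
    _ = ENNReal.ofReal (∫ t in Ioc 0 x, t ^ c) :=
        (ofReal_integral_eq_lintegral_ofReal hioc hnn).symm
    _ = ENNReal.ofReal (x ^ (c + 1) / (c + 1)) := by
        rw [← intervalIntegral.integral_of_le hx.le,
          integral_rpow (Or.inl hc), Real.zero_rpow (by linarith), sub_zero]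


lemma fubini_tri {a b : ℝ} {w k : ℝ → ℝ≥0∞} (hw : Measurable w) (hk : Measurable k) :
    ∫⁻ x in Ioo a b, w x * ∫⁻ t in Ioo x b, k t =
      ∫⁻ t in Ioo a b, k t * ∫⁻ x in Ioo a t, w x := by
  set G : ℝ → ℝ → ℝ≥0∞ := fun x t => if x < t then w x * k t else 0 with hG
  have hGm : Measurable (Function.uncurry G) := by
    exact Measurable.ite (measurableSet_lt measurable_fst measurable_snd)
      ((hw.comp measurable_fst).mul (hk.comp measurable_snd)) measurable_const
  have h1 : ∫⁻ x in Ioo a b, w x * ∫⁻ t in Ioo x b, k t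
      = ∫⁻ x in Ioo a b, ∫⁻ t in Ioo a b, G x t := by
    refine setLIntegral_congr_fun measurableSet_Ioo (fun x hx => ?_)
    have hset : Ioi x ∩ Ioo a b = Ioo x b := by
      ext t
      simp only [mem_inter_iff, mem_Ioi, mem_Ioo]
      exact ⟨fun ⟨h1, _, h3⟩ => ⟨h1, h3⟩, fun ⟨h1, h2⟩ => ⟨h1, lt_trans hx.1 h1, h2⟩⟩
    calc w x * ∫⁻ t in Ioo x b, k t = ∫⁻ t in Ioo x b, w x * k t :=
          (lintegral_const_mul _ hk).symm
      _ = ∫⁻ t in Ioi x, w x * k t ∂(volume.restrict (Ioo a b)) := by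
          rw [Measure.restrict_restrict measurableSet_Ioi, hset]
      _ = ∫⁻ t in Ioo a b, (Ioi x).indicator (fun t => w x * k t) t := by
          rw [lintegral_indicator measurableSet_Ioi]
      _ = ∫⁻ t in Ioo a b, G x t := by
          refine lintegral_congr fun t => ?_
          simp [hG, Set.indicator_apply, mem_Ioi]
  have h2 : ∫⁻ t in Ioo a b, k t * ∫⁻ x in Ioo a t, w x
      = ∫⁻ t in Ioo a b, ∫⁻ x in Ioo a b, G x t := by
    refine setLIntegral_congr_fun measurableSet_Ioo (fun t ht => ?_)
    have hset : Iio t ∩ Ioo a b = Ioo a t := by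
      ext x
      simp only [mem_inter_iff, mem_Iio, mem_Ioo]
      exact ⟨fun ⟨h1, h2, _⟩ => ⟨h2, h1⟩, fun ⟨h1, h2⟩ => ⟨h2, h1, lt_trans h2 ht.2⟩⟩
    calc k t * ∫⁻ x in Ioo a t, w x = ∫⁻ x in Ioo a t, w x * k t := by
          rw [lintegral_mul_const _ hw, mul_comm]
      _ = ∫⁻ x in Iio t, w x * k t ∂(volume.restrict (Ioo a b)) := by
          rw [Measure.restrict_restrict measurableSet_Iio, hset]
      _ = ∫⁻ x in Ioo a b, (Iio t).indicator (fun x => w x * k t) x := by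
          rw [lintegral_indicator measurableSet_Iio]
      _ = ∫⁻ x in Ioo a b, G x t := by
          refine lintegral_congr fun x => ?_
          simp [hG, Set.indicator_apply, mem_Iio]
  rw [h1, h2]
  exact lintegral_lintegral_swap hGm.aemeasurable


lemma measurable_phi {f : ℝ → ℝ} (hf : Measurable f) :
    Measurable fun t => ENNReal.ofReal |f t| :=
  ENNReal.measurable_ofReal.comp hf.abs

lemma measurable_psi {f : ℝ → ℝ} (hf : Measurable f) :
    Measurable fun t => ENNReal.ofReal |f t| / ENNReal.ofReal t :=
  (measurable_phi hf).div (ENNReal.measurable_ofReal.comp measurable_id)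

lemma measurable_section {g : ℝ → ℝ≥0∞} (hg : Measurable g) :
    Measurable fun x => ∫⁻ t in Ioo x 1, g t := by
  have : (fun x => ∫⁻ t in Ioo x 1, g t)
      = fun x => ∫⁻ t, (fun q : ℝ × ℝ => if q.1 < q.2 ∧ q.2 < 1 then g q.2 else 0) (x, t) := by
    funext x
    rw [← lintegral_indicator measurableSet_Ioo]
    refine lintegral_congr fun t => ?_
    simp [Set.indicator_apply, mem_Ioo]
  rw [this]
  have hm : Measurable fun q : ℝ × ℝ => if q.1 < q.2 ∧ q.2 < 1 then g q.2 else 0 :=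
    Measurable.ite ((measurableSet_lt measurable_fst measurable_snd).inter
      (measurable_snd measurableSet_Iio)) (hg.comp measurable_snd) measurable_const
  exact Measurable.lintegral_prod_right' (ν := volume) hm

lemma measurable_section_lo {g : ℝ → ℝ≥0∞} (hg : Measurable g) :
    Measurable fun x => ∫⁻ t in Ioo 0 x, g t := by
  have : (fun x => ∫⁻ t in Ioo 0 x, g t)
      = fun x => ∫⁻ t, (fun q : ℝ × ℝ => if 0 < q.2 ∧ q.2 < q.1 then g q.2 else 0) (x, t) := by
    funext x
    rw [← lintegral_indicator measurableSet_Ioo]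
    refine lintegral_congr fun t => ?_
    simp [Set.indicator_apply, mem_Ioo]
  rw [this]
  have hm : Measurable fun q : ℝ × ℝ => if 0 < q.2 ∧ q.2 < q.1 then g q.2 else 0 :=
    Measurable.ite ((measurable_snd measurableSet_Ioi).inter
      (measurableSet_lt measurable_snd measurable_fst)) (hg.comp measurable_snd) measurable_const
  exact Measurable.lintegral_prod_right' (ν := volume) hm

lemma measurable_copsonAbs {f : ℝ → ℝ} (hf : Measurable f) :
    Measurable (copsonAbs f) :=
  measurable_section (measurable_psi hf)

lemma measurable_cesaroAbs {f : ℝ → ℝ} (hf : Measurable f) :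
    Measurable (cesaroAbs f) :=
  (measurable_section_lo (measurable_phi hf)).div
    (ENNReal.measurable_ofReal.comp measurable_id)


lemma hardy {p : ℝ} (hp : 1 < p) {g : ℝ → ℝ≥0∞} (hg : Measurable g)
    (hfin : (∫⁻ t in Ioo (0:ℝ) 1, g t ^ p) < ⊤) :
    (∫⁻ x in Ioo (0:ℝ) 1, ((∫⁻ t in Ioo 0 x, g t) / ENNReal.ofReal x) ^ p) < ⊤ := by
  have hp0 : (0:ℝ) < p := by linarith
  have hp1 : (0:ℝ) < p - 1 := by linarith
  set q : ℝ := p / (p - 1) with hqdef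
  have hpq : p.HolderConjugate q := Real.HolderConjugate.conjExponent hp
  set r : ℝ := (p - 1) / (2 * p) with hrdef
  have hr0 : 0 < r := div_pos hp1 (by linarith)
  have hrq : r * q = 1 / 2 := by
    rw [hrdef, hqdef]; field_simp
  have hrp : r * p = (p - 1) / 2 := by
    rw [hrdef]; field_simp
  have hpdivq : 1 / q * p = p - 1 := by
    rw [hqdef]; field_simp
  set e : ℝ := (p - 1) / 2 - p with hedef
  have he1 : e + 1 = -((p - 1) / 2) := by rw [hedef]; ring
  have hene : e ≠ -1 := by
    intro h; rw [hedef] at h; linarith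
  set m : ℝ → ℝ≥0∞ := fun t => g t ^ p * ENNReal.ofReal (t ^ (r * p)) with hmdef
  have hmmeas : Measurable m :=
    (hg.pow measurable_const).mul
      (ENNReal.measurable_ofReal.comp (measurable_rpow_const (r * p)))
  set A : ℝ → ℝ≥0∞ := fun x => ∫⁻ t in Ioo 0 x, m t with hAdef
  set C1 : ℝ≥0∞ := ENNReal.ofReal (2 ^ (p - 1)) with hC1def
  set C2 : ℝ≥0∞ := ENNReal.ofReal (2 / (p - 1)) with hC2def
  -- Step H1: pointwise Hölder
  have H1 : ∀ x ∈ Ioo (0:ℝ) 1, (∫⁻ t in Ioo 0 x, g t)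
      ≤ A x ^ (1 / p) * ENNReal.ofReal (2 * x ^ (1/2 : ℝ)) ^ (1 / q) := by
    intro x hx
    have hmul : ∫⁻ t in Ioo 0 x, g t
        = ∫⁻ t in Ioo 0 x,
          ((fun t => g t * ENNReal.ofReal (t ^ r)) * fun t => ENNReal.ofReal (t ^ (-r))) t := by
      refine (setLIntegral_congr_fun measurableSet_Ioo (fun t ht => ?_)).symm
      simp only [Pi.mul_apply]
      rw [mul_assoc, ofReal_rpow_mul ht.1, add_neg_cancel, Real.rpow_zero,
        ENNReal.ofReal_one, mul_one]
    have hmeas1 : AEMeasurable (fun t => g t * ENNReal.ofReal (t ^ r))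
        (volume.restrict (Ioo 0 x)) :=
      (hg.mul (ENNReal.measurable_ofReal.comp (measurable_rpow_const r))).aemeasurable
    have hmeas2 : AEMeasurable (fun t : ℝ => ENNReal.ofReal (t ^ (-r)))
        (volume.restrict (Ioo 0 x)) :=
      (ENNReal.measurable_ofReal.comp (measurable_rpow_const (-r))).aemeasurable
    have hH := ENNReal.lintegral_mul_le_Lp_mul_Lq (volume.restrict (Ioo 0 x)) hpq hmeas1 hmeas2
    have hLp : (∫⁻ t in Ioo 0 x, (g t * ENNReal.ofReal (t ^ r)) ^ p) = A x := by
      refine setLIntegral_congr_fun measurableSet_Ioo (fun t ht => ?_)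
      rw [ENNReal.mul_rpow_of_nonneg _ _ hp0.le,
        ENNReal.ofReal_rpow_of_pos (Real.rpow_pos_of_pos ht.1 r),
        ← Real.rpow_mul ht.1.le]
    have hLq : (∫⁻ t in Ioo 0 x, (ENNReal.ofReal (t ^ (-r))) ^ q)
        = ENNReal.ofReal (2 * x ^ (1/2 : ℝ)) := by
      have step : ∀ t ∈ Ioo (0:ℝ) x, (ENNReal.ofReal (t ^ (-r))) ^ q
          = ENNReal.ofReal (t ^ (-(1/2) : ℝ)) := by
        intro t ht
        rw [ENNReal.ofReal_rpow_of_pos (Real.rpow_pos_of_pos ht.1 _),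
          ← Real.rpow_mul ht.1.le]
        congr 1
        rw [neg_mul, hrq]
      rw [setLIntegral_congr_fun measurableSet_Ioo step,
        lint_rpow_lo (by norm_num) hx.1]
      norm_num
      rw [show x ^ ((1:ℝ)/2) / (1/2) = 2 * x ^ ((1:ℝ)/2) by ring]
      rw [ENNReal.ofReal_mul (by norm_num : (0:ℝ) ≤ 2), ENNReal.ofReal_ofNat]
    rw [hmul]
    refine hH.trans (le_of_eq ?_)
    rw [hLp, hLq]
  -- Step H2: pointwise bound of integrand
  have H2 : ∀ x ∈ Ioo (0:ℝ) 1, ((∫⁻ t in Ioo 0 x, g t) / ENNReal.ofReal x) ^ p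
      ≤ C1 * (A x * ENNReal.ofReal (x ^ e)) := by
    intro x hx
    have hxpos := hx.1
    have step1 : ((∫⁻ t in Ioo 0 x, g t) / ENNReal.ofReal x) ^ p
        ≤ ((A x ^ (1 / p) * ENNReal.ofReal (2 * x ^ (1/2 : ℝ)) ^ (1 / q)) / ENNReal.ofReal x) ^ p :=
      ENNReal.rpow_le_rpow (ENNReal.div_le_div_right (H1 x hx) _) hp0.le
    refine step1.trans (le_of_eq ?_)
    rw [ENNReal.div_rpow_of_nonneg _ _ hp0.le, ENNReal.mul_rpow_of_nonneg _ _ hp0.le,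
      ← ENNReal.rpow_mul, ← ENNReal.rpow_mul, one_div_mul_cancel hp0.ne', ENNReal.rpow_one,
      hpdivq]
    have hb : (0:ℝ) < 2 * x ^ (1/2 : ℝ) := by positivity
    rw [ENNReal.ofReal_rpow_of_pos hb,
      Real.mul_rpow (by norm_num) (Real.rpow_nonneg hxpos.le _),
      ← Real.rpow_mul hxpos.le,
      ENNReal.ofReal_rpow_of_pos hxpos,
      div_eq_mul_inv,
      ← ENNReal.ofReal_inv_of_pos (Real.rpow_pos_of_pos hxpos p),
      ← Real.rpow_neg hxpos.le,
      ENNReal.ofReal_mul (by positivity : (0:ℝ) ≤ 2 ^ (p-1))]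
    have hcomb : ENNReal.ofReal (x ^ ((1/2:ℝ) * (p-1))) * ENNReal.ofReal (x ^ (-p))
        = ENNReal.ofReal (x ^ e) := by
      rw [ofReal_rpow_mul hxpos]
      congr 1
      rw [hedef]; ring
    calc A x * (ENNReal.ofReal (2 ^ (p-1)) * ENNReal.ofReal (x ^ ((1/2:ℝ) * (p-1))))
          * ENNReal.ofReal (x ^ (-p))
        = ENNReal.ofReal (2 ^ (p-1)) * (A x * (ENNReal.ofReal (x ^ ((1/2:ℝ) * (p-1)))
          * ENNReal.ofReal (x ^ (-p)))) := by ring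
      _ = C1 * (A x * ENNReal.ofReal (x ^ e)) := by rw [hcomb]
  -- Step H3: integrate
  have hAmeas : Measurable A := measurable_section_lo hmmeas
  have hw : Measurable fun x : ℝ => ENNReal.ofReal (x ^ e) := by
    exact ENNReal.measurable_ofReal.comp (measurable_rpow_const e)
  have H3 : (∫⁻ x in Ioo (0:ℝ) 1, ((∫⁻ t in Ioo 0 x, g t) / ENNReal.ofReal x) ^ p)
      ≤ C1 * ∫⁻ x in Ioo (0:ℝ) 1, A x * ENNReal.ofReal (x ^ e) := by
    rw [← lintegral_const_mul (f := fun x => A x * ENNReal.ofReal (x ^ e)) _ (hAmeas.mul hw)]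
    refine lintegral_mono_ae ?_
    filter_upwards [ae_restrict_mem measurableSet_Ioo] with x hx
    exact H2 x hx
  -- Step H4: Fubini
  have H4 : (∫⁻ x in Ioo (0:ℝ) 1, A x * ENNReal.ofReal (x ^ e))
      = ∫⁻ x in Ioo (0:ℝ) 1, m x * ∫⁻ t in Ioo x 1, ENNReal.ofReal (t ^ e) := by
    rw [fubini_tri hmmeas hw]
    exact lintegral_congr fun x => mul_comm _ _
  -- Step H5: bound inner integral
  have H5 : ∀ x ∈ Ioo (0:ℝ) 1, (∫⁻ t in Ioo x 1, ENNReal.ofReal (t ^ e))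
      ≤ ENNReal.ofReal (x ^ (e + 1)) * C2 := by
    intro x hx
    rw [lint_rpow_hi hene hx.1 hx.2.le]
    have ha : (0:ℝ) < x ^ (e + 1) := Real.rpow_pos_of_pos hx.1 _
    have key : (1 - x ^ (e + 1)) / (e + 1) ≤ x ^ (e + 1) * (2 / (p - 1)) := by
      rw [show (1 - x ^ (e+1)) / (e+1) = (x ^ (e+1) - 1) * (2 / (p-1)) by
        rw [he1]
        field_simp
        ring]
      have h2 : (0:ℝ) < 2 / (p - 1) := by positivity
      nlinarith
    calc ENNReal.ofReal ((1 - x ^ (e + 1)) / (e + 1))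
        ≤ ENNReal.ofReal (x ^ (e + 1) * (2 / (p - 1))) := ENNReal.ofReal_le_ofReal key
      _ = ENNReal.ofReal (x ^ (e + 1)) * C2 := ENNReal.ofReal_mul ha.le
  -- Step H6: simplify m x * ofReal (x^(e+1))
  have H6 : ∀ x ∈ Ioo (0:ℝ) 1, m x * (ENNReal.ofReal (x ^ (e + 1)) * C2) = g x ^ p * C2 := by
    intro x hx
    rw [hmdef]
    simp only []
    rw [← mul_assoc, mul_assoc (g x ^ p), ofReal_rpow_mul hx.1,
      show r * p + (e + 1) = 0 by rw [hrp, he1]; ring, Real.rpow_zero,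
      ENNReal.ofReal_one, mul_one]
  -- Final assembly
  have final : (∫⁻ x in Ioo (0:ℝ) 1, ((∫⁻ t in Ioo 0 x, g t) / ENNReal.ofReal x) ^ p)
      ≤ C1 * (∫⁻ x in Ioo (0:ℝ) 1, g x ^ p * C2) := by
    refine H3.trans (mul_le_mul_right ?_ C1)
    rw [H4]
    refine lintegral_mono_ae ?_
    filter_upwards [ae_restrict_mem measurableSet_Ioo] with x hx
    calc m x * ∫⁻ t in Ioo x 1, ENNReal.ofReal (t ^ e)
        ≤ m x * (ENNReal.ofReal (x ^ (e + 1)) * C2) := mul_le_mul_right (H5 x hx) _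
      _ = g x ^ p * C2 := H6 x hx
  refine lt_of_le_of_lt final ?_
  rw [lintegral_mul_const _ (hg.pow measurable_const)]
  exact ENNReal.mul_lt_top ENNReal.ofReal_lt_top
    (ENNReal.mul_lt_top hfin ENNReal.ofReal_lt_top)


lemma copson {p : ℝ} (hp : 1 < p) {g : ℝ → ℝ≥0∞} (hg : Measurable g)
    (hfin : (∫⁻ t in Ioo (0:ℝ) 1, g t ^ p) < ⊤) :
    (∫⁻ x in Ioo (0:ℝ) 1, (∫⁻ t in Ioo x 1, g t / ENNReal.ofReal t) ^ p) < ⊤ := by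
  have hp0 : (0:ℝ) < p := by linarith
  have hp1 : (0:ℝ) < p - 1 := by linarith
  set q : ℝ := p / (p - 1) with hqdef
  have hpq : p.HolderConjugate q := Real.HolderConjugate.conjExponent hp
  have hq0 : (0:ℝ) < q := div_pos hp0 hp1
  set a : ℝ := -(1 / (2 * p)) with hadef
  have hap : a * p = -(1/2) := by rw [hadef]; field_simp
  set s : ℝ := -1 - a with hsdef
  have has : a + s = -1 := by rw [hsdef]; ring
  set c : ℝ := s * q with hcdef
  have hc1 : c + 1 = -(1 / (2 * (p - 1))) := by
    rw [hcdef, hsdef, hadef, hqdef]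
    field_simp
    ring
  have hcne : c ≠ -1 := by
    intro h
    rw [h] at hc1
    have : (0:ℝ) < 1 / (2 * (p-1)) := by positivity
    linarith
  set d : ℝ := 2 * (p - 1) with hddef
  have hd0 : (0:ℝ) < d := by rw [hddef]; linarith
  set e : ℝ := -(1/2 : ℝ) with hedef
  have hce : (c + 1) * (p - 1) = e := by
    rw [hc1, hedef, hddef]
    field_simp
  set m : ℝ → ℝ≥0∞ := fun t => g t ^ p * ENNReal.ofReal (t ^ (a * p)) with hmdef
  have hmmeas : Measurable m :=
    (hg.pow measurable_const).mul
      (ENNReal.measurable_ofReal.comp (measurable_rpow_const (a * p)))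
  set A : ℝ → ℝ≥0∞ := fun x => ∫⁻ t in Ioo x 1, m t with hAdef
  set C1 : ℝ≥0∞ := ENNReal.ofReal (d ^ (p - 1)) with hC1def
  -- Step H1: pointwise Hölder
  have H1 : ∀ x ∈ Ioo (0:ℝ) 1, (∫⁻ t in Ioo x 1, g t / ENNReal.ofReal t)
      ≤ A x ^ (1 / p) * ENNReal.ofReal (x ^ (c + 1) * d) ^ (1 / q) := by
    intro x hx
    have hmul : ∫⁻ t in Ioo x 1, g t / ENNReal.ofReal t
        = ∫⁻ t in Ioo x 1,
          ((fun t => g t * ENNReal.ofReal (t ^ a)) * fun t => ENNReal.ofReal (t ^ s)) t := by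
      refine (setLIntegral_congr_fun measurableSet_Ioo (fun t ht => ?_)).symm
      have ht0 : 0 < t := lt_trans hx.1 ht.1
      simp only [Pi.mul_apply]
      rw [mul_assoc, ofReal_rpow_mul ht0, has, Real.rpow_neg_one,
        ENNReal.ofReal_inv_of_pos ht0, ← div_eq_mul_inv]
    have hmeas1 : AEMeasurable (fun t => g t * ENNReal.ofReal (t ^ a))
        (volume.restrict (Ioo x 1)) :=
      (hg.mul (ENNReal.measurable_ofReal.comp (measurable_rpow_const a))).aemeasurable
    have hmeas2 : AEMeasurable (fun t : ℝ => ENNReal.ofReal (t ^ s))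
        (volume.restrict (Ioo x 1)) :=
      (ENNReal.measurable_ofReal.comp (measurable_rpow_const s)).aemeasurable
    have hH := ENNReal.lintegral_mul_le_Lp_mul_Lq (volume.restrict (Ioo x 1)) hpq hmeas1 hmeas2
    have hLp : (∫⁻ t in Ioo x 1, (g t * ENNReal.ofReal (t ^ a)) ^ p) = A x := by
      refine setLIntegral_congr_fun measurableSet_Ioo (fun t ht => ?_)
      have ht0 : 0 < t := lt_trans hx.1 ht.1
      rw [ENNReal.mul_rpow_of_nonneg _ _ hp0.le,
        ENNReal.ofReal_rpow_of_pos (Real.rpow_pos_of_pos ht0 a),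
        ← Real.rpow_mul ht0.le]
    have hLq : (∫⁻ t in Ioo x 1, (ENNReal.ofReal (t ^ s)) ^ q)
        = ENNReal.ofReal ((1 - x ^ (c + 1)) / (c + 1)) := by
      have step : ∀ t ∈ Ioo x 1, (ENNReal.ofReal (t ^ s)) ^ q
          = ENNReal.ofReal (t ^ c) := by
        intro t ht
        have ht0 : 0 < t := lt_trans hx.1 ht.1
        rw [ENNReal.ofReal_rpow_of_pos (Real.rpow_pos_of_pos ht0 _),
          ← Real.rpow_mul ht0.le]
      rw [setLIntegral_congr_fun measurableSet_Ioo step,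
        lint_rpow_hi hcne hx.1 hx.2.le]
    have hBle : ENNReal.ofReal ((1 - x ^ (c + 1)) / (c + 1))
        ≤ ENNReal.ofReal (x ^ (c + 1) * d) := by
      refine ENNReal.ofReal_le_ofReal ?_
      have hu : (0:ℝ) < x ^ (c + 1) := Real.rpow_pos_of_pos hx.1 _
      rw [show (1 - x ^ (c+1)) / (c+1) = (x ^ (c+1) - 1) * d by
        rw [hc1, div_neg, one_div, div_inv_eq_mul]
        ring]
      nlinarith
    rw [hmul]
    refine hH.trans ?_
    rw [hLp, hLq]
    exact mul_le_mul_right (ENNReal.rpow_le_rpow hBle (by positivity)) _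
  -- Step H2
  have hpdivq : 1 / q * p = p - 1 := by
    rw [hqdef]; field_simp
  have H2 : ∀ x ∈ Ioo (0:ℝ) 1, (∫⁻ t in Ioo x 1, g t / ENNReal.ofReal t) ^ p
      ≤ C1 * (A x * ENNReal.ofReal (x ^ e)) := by
    intro x hx
    have hxpos := hx.1
    have step1 : (∫⁻ t in Ioo x 1, g t / ENNReal.ofReal t) ^ p
        ≤ (A x ^ (1 / p) * ENNReal.ofReal (x ^ (c + 1) * d) ^ (1 / q)) ^ p :=
      ENNReal.rpow_le_rpow (H1 x hx) hp0.le
    refine step1.trans (le_of_eq ?_)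
    have hu : (0:ℝ) < x ^ (c + 1) := Real.rpow_pos_of_pos hxpos _
    rw [ENNReal.mul_rpow_of_nonneg _ _ hp0.le, ← ENNReal.rpow_mul, ← ENNReal.rpow_mul,
      one_div_mul_cancel hp0.ne', ENNReal.rpow_one, hpdivq,
      ENNReal.ofReal_rpow_of_pos (by positivity),
      Real.mul_rpow hu.le hd0.le, ← Real.rpow_mul hxpos.le, hce,
      ENNReal.ofReal_mul (Real.rpow_nonneg hxpos.le _)]
    ring
  -- Step H3
  have hAmeas : Measurable A := measurable_section hmmeas
  have hw : Measurable fun x : ℝ => ENNReal.ofReal (x ^ e) := by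
    exact ENNReal.measurable_ofReal.comp (measurable_rpow_const e)
  have H3 : (∫⁻ x in Ioo (0:ℝ) 1, (∫⁻ t in Ioo x 1, g t / ENNReal.ofReal t) ^ p)
      ≤ C1 * ∫⁻ x in Ioo (0:ℝ) 1, ENNReal.ofReal (x ^ e) * A x := by
    rw [← lintegral_const_mul (f := fun x => ENNReal.ofReal (x ^ e) * A x) _ (hw.mul hAmeas)]
    refine lintegral_mono_ae ?_
    filter_upwards [ae_restrict_mem measurableSet_Ioo] with x hx
    refine (H2 x hx).trans (le_of_eq ?_)
    ring
  -- Step H4: Fubini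
  have H4 : (∫⁻ x in Ioo (0:ℝ) 1, ENNReal.ofReal (x ^ e) * A x)
      = ∫⁻ t in Ioo (0:ℝ) 1, m t * ∫⁻ x in Ioo 0 t, ENNReal.ofReal (x ^ e) := by
    exact fubini_tri hw hmmeas
  -- Step H5/H6
  have H5 : ∀ t ∈ Ioo (0:ℝ) 1, (m t * ∫⁻ x in Ioo 0 t, ENNReal.ofReal (x ^ e))
      = g t ^ p * ENNReal.ofReal 2 := by
    intro t ht
    have hmt : m t = g t ^ p * ENNReal.ofReal (t ^ (a * p)) := rfl
    have he2 : e + 1 = (1/2 : ℝ) := by rw [hedef]; norm_num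
    rw [hmt, lint_rpow_lo (by rw [hedef]; norm_num) ht.1, he2,
      show t ^ (1/2:ℝ) / (1/2) = t ^ (1/2:ℝ) * 2 by ring,
      ENNReal.ofReal_mul (Real.rpow_nonneg ht.1.le _)]
    calc (g t ^ p * ENNReal.ofReal (t ^ (a * p)))
          * (ENNReal.ofReal (t ^ (1/2:ℝ)) * ENNReal.ofReal 2)
        = g t ^ p * ((ENNReal.ofReal (t ^ (a * p)) * ENNReal.ofReal (t ^ (1/2:ℝ)))
          * ENNReal.ofReal 2) := by ring
      _ = g t ^ p * ENNReal.ofReal 2 := by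
          rw [ofReal_rpow_mul ht.1,
            show a * p + 1/2 = 0 by rw [hap]; norm_num,
            Real.rpow_zero, ENNReal.ofReal_one, one_mul]
  have final : (∫⁻ x in Ioo (0:ℝ) 1, (∫⁻ t in Ioo x 1, g t / ENNReal.ofReal t) ^ p)
      ≤ C1 * (∫⁻ t in Ioo (0:ℝ) 1, g t ^ p * ENNReal.ofReal 2) := by
    refine H3.trans (mul_le_mul_right ?_ C1)
    rw [H4]
    refine lintegral_mono_ae ?_
    filter_upwards [ae_restrict_mem measurableSet_Ioo] with t ht
    exact le_of_eq (H5 t ht)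
  refine lt_of_le_of_lt final ?_
  rw [lintegral_mul_const _ (hg.pow measurable_const)]
  exact ENNReal.mul_lt_top ENNReal.ofReal_lt_top
    (ENNReal.mul_lt_top hfin ENNReal.ofReal_lt_top)


lemma K1 {f : ℝ → ℝ} (hf : Measurable f) {x : ℝ} (hx0 : 0 < x) (hx1 : x ≤ 1) :
    (∫⁻ t in Ioo 0 x, ENNReal.ofReal |f t|) ≤ ∫⁻ t in Ioo 0 x, copsonAbs f t := by
  have hpsim : Measurable fun t => ENNReal.ofReal |f t| / ENNReal.ofReal t := measurable_psi hf
  have hvol : ∀ s : ℝ, (∫⁻ _ in Ioo (0:ℝ) s, (1:ℝ≥0∞)) = ENNReal.ofReal s := by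
    intro s
    rw [setLIntegral_one, Real.volume_Ioo, sub_zero]
  calc ∫⁻ t in Ioo 0 x, ENNReal.ofReal |f t|
      = ∫⁻ t in Ioo 0 x, (ENNReal.ofReal |f t| / ENNReal.ofReal t)
          * ∫⁻ u in Ioo (0:ℝ) t, (1:ℝ≥0∞) := by
        refine setLIntegral_congr_fun measurableSet_Ioo (fun t ht => ?_)
        rw [hvol t, ENNReal.div_mul_cancel (ENNReal.ofReal_pos.mpr ht.1).ne' ENNReal.ofReal_ne_top]
    _ = ∫⁻ t in Ioo 0 x, (1:ℝ≥0∞)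
          * ∫⁻ s in Ioo t x, ENNReal.ofReal |f s| / ENNReal.ofReal s :=
        (fubini_tri measurable_one hpsim).symm
    _ ≤ ∫⁻ t in Ioo 0 x, copsonAbs f t := by
        refine lintegral_mono_ae ?_
        filter_upwards [ae_restrict_mem measurableSet_Ioo] with t ht
        rw [one_mul]
        exact lintegral_mono_set (Ioo_subset_Ioo_right hx1)

lemma K2 {f : ℝ → ℝ} (hf : Measurable f) {x : ℝ} (hx : x ∈ Ioo (0:ℝ) 1) :
    copsonAbs f x ≤ (∫⁻ t in Ioo (0:ℝ) 1, ENNReal.ofReal |f t|)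
      + ∫⁻ t in Ioo x 1, cesaroAbs f t / ENNReal.ofReal t := by
  have hphim : Measurable fun t => ENNReal.ofReal |f t| := measurable_phi hf
  have hwm : Measurable fun u : ℝ => ENNReal.ofReal (u ^ (-2:ℝ)) :=
    ENNReal.measurable_ofReal.comp (measurable_rpow_const (-2))
  have step1 : copsonAbs f x
      = (∫⁻ s in Ioo x 1, ENNReal.ofReal |f s| * ENNReal.ofReal (s⁻¹ - 1))
        + ∫⁻ s in Ioo x 1, ENNReal.ofReal |f s| := by
    have hm1 : Measurable fun s : ℝ => ENNReal.ofReal |f s| * ENNReal.ofReal (s⁻¹ - 1) := by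
      exact hphim.mul (ENNReal.measurable_ofReal.comp (measurable_inv.sub measurable_const))
    rw [copsonAbs, ← lintegral_add_left hm1]
    refine setLIntegral_congr_fun measurableSet_Ioo (fun s hs => ?_)
    have hs0 : 0 < s := lt_trans hx.1 hs.1
    have hs1 : s < 1 := hs.2
    have hinv : (1:ℝ) ≤ s⁻¹ := by
      have h := mul_inv_cancel₀ hs0.ne'
      nlinarith [inv_pos.mpr hs0]
    rw [div_eq_mul_inv, ← ENNReal.ofReal_inv_of_pos hs0,
      show ENNReal.ofReal s⁻¹ = ENNReal.ofReal (s⁻¹ - 1) + 1 by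
        rw [← ENNReal.ofReal_one, ← ENNReal.ofReal_add (by linarith) zero_le_one]
        norm_num,
      mul_add, mul_one]
  have step3 : (∫⁻ s in Ioo x 1, ENNReal.ofReal |f s| * ENNReal.ofReal (s⁻¹ - 1))
      = ∫⁻ s in Ioo x 1, ENNReal.ofReal |f s|
          * ∫⁻ u in Ioo s 1, ENNReal.ofReal (u ^ (-2:ℝ)) := by
    refine setLIntegral_congr_fun measurableSet_Ioo (fun s hs => ?_)
    have hs0 : 0 < s := lt_trans hx.1 hs.1
    rw [lint_rpow_hi (by norm_num) hs0 hs.2.le,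
      show ((-2:ℝ) + 1) = -1 by norm_num, Real.rpow_neg_one,
      show (1 - s⁻¹) / (-1:ℝ) = s⁻¹ - 1 by ring]
  have step4 : (∫⁻ s in Ioo x 1, ENNReal.ofReal |f s|
        * ∫⁻ u in Ioo s 1, ENNReal.ofReal (u ^ (-2:ℝ)))
      = ∫⁻ t in Ioo x 1, ENNReal.ofReal (t ^ (-2:ℝ))
          * ∫⁻ s in Ioo x t, ENNReal.ofReal |f s| :=
    fubini_tri hphim hwm
  have step5 : (∫⁻ t in Ioo x 1, ENNReal.ofReal (t ^ (-2:ℝ))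
        * ∫⁻ s in Ioo x t, ENNReal.ofReal |f s|)
      ≤ ∫⁻ t in Ioo x 1, cesaroAbs f t / ENNReal.ofReal t := by
    refine lintegral_mono_ae ?_
    filter_upwards [ae_restrict_mem measurableSet_Ioo] with t ht
    have ht0 : 0 < t := lt_trans hx.1 ht.1
    have hmono : (∫⁻ s in Ioo x t, ENNReal.ofReal |f s|)
        ≤ ∫⁻ s in Ioo 0 t, ENNReal.ofReal |f s| :=
      lintegral_mono_set (Ioo_subset_Ioo_left hx.1.le)
    calc ENNReal.ofReal (t ^ (-2:ℝ)) * ∫⁻ s in Ioo x t, ENNReal.ofReal |f s|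
        ≤ ENNReal.ofReal (t ^ (-2:ℝ)) * ∫⁻ s in Ioo 0 t, ENNReal.ofReal |f s| :=
          mul_le_mul_right hmono _
      _ = cesaroAbs f t / ENNReal.ofReal t := by
          rw [show (t:ℝ) ^ (-2:ℝ) = t⁻¹ * t⁻¹ by
              rw [show (-2:ℝ) = (-1) + (-1) by norm_num, Real.rpow_add ht0,
                Real.rpow_neg_one],
            ENNReal.ofReal_mul (inv_nonneg.mpr ht0.le),
            ENNReal.ofReal_inv_of_pos ht0, cesaroAbs,
            div_eq_mul_inv, div_eq_mul_inv]
          ring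
  calc copsonAbs f x
      = (∫⁻ s in Ioo x 1, ENNReal.ofReal |f s| * ENNReal.ofReal (s⁻¹ - 1))
        + ∫⁻ s in Ioo x 1, ENNReal.ofReal |f s| := step1
    _ ≤ (∫⁻ t in Ioo x 1, cesaroAbs f t / ENNReal.ofReal t)
        + ∫⁻ t in Ioo (0:ℝ) 1, ENNReal.ofReal |f t| := by
        refine add_le_add ?_ (lintegral_mono_set (Ioo_subset_Ioo_left hx.1.le))
        rw [step3, step4]
        exact step5
    _ = (∫⁻ t in Ioo (0:ℝ) 1, ENNReal.ofReal |f t|)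
        + ∫⁻ t in Ioo x 1, cesaroAbs f t / ENNReal.ofReal t := add_comm _ _

end CopsonAux

open CopsonAux ENNReal

/-- For `1 < p < ∞` and measurable `f : (0,1) → ℝ`: `C*|f| ∈ L^p(0,1)` iff
`C|f| ∈ L^p(0,1)` and `f ∈ L^1(0,1)`, i.e. `C*(L^p)[0,1] = C(L^p)[0,1] ∩ L^1[0,1]`. -/
theorem stmt3 (p : ℝ) (hp : 1 < p) (f : ℝ → ℝ) (hf : Measurable f) :
    (∫⁻ x in Set.Ioo (0:ℝ) 1, copsonAbs f x ^ p) < ⊤ ↔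
      ((∫⁻ x in Set.Ioo (0:ℝ) 1, cesaroAbs f x ^ p) < ⊤ ∧
        (∫⁻ t in Set.Ioo (0:ℝ) 1, ENNReal.ofReal |f t|) < ⊤) := by
  constructor
  · intro hC
    have hcopm : Measurable (copsonAbs f) := measurable_copsonAbs hf
    have hT : (∫⁻ t in Ioo (0:ℝ) 1, ENNReal.ofReal |f t|) < ⊤ := by
      have h1 : (∫⁻ t in Ioo (0:ℝ) 1, ENNReal.ofReal |f t|)
          ≤ ∫⁻ t in Ioo (0:ℝ) 1, copsonAbs f t := K1 hf one_pos le_rfl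
      have h2 : (∫⁻ t in Ioo (0:ℝ) 1, copsonAbs f t)
          ≤ ∫⁻ t in Ioo (0:ℝ) 1, (1 + copsonAbs f t ^ p) := by
        refine lintegral_mono fun t => ?_
        rcases le_total (copsonAbs f t) 1 with h | h
        · exact h.trans le_self_add
        · calc copsonAbs f t = copsonAbs f t ^ (1:ℝ) := (ENNReal.rpow_one _).symm
            _ ≤ copsonAbs f t ^ p := ENNReal.rpow_le_rpow_of_exponent_le h hp.le
            _ ≤ 1 + copsonAbs f t ^ p := le_add_self
      have h3 : (∫⁻ t in Ioo (0:ℝ) 1, (1 + copsonAbs f t ^ p)) < ⊤ := by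
        rw [lintegral_add_left measurable_const]
        refine ENNReal.add_lt_top.mpr ⟨?_, hC⟩
        simp [lintegral_const, Measure.restrict_apply_univ, Real.volume_Ioo]
      exact lt_of_le_of_lt (h1.trans h2) h3
    refine ⟨?_, hT⟩
    have key := hardy hp hcopm hC
    refine lt_of_le_of_lt ?_ key
    refine lintegral_mono_ae ?_
    filter_upwards [ae_restrict_mem measurableSet_Ioo] with x hx
    refine ENNReal.rpow_le_rpow ?_ (by linarith)
    exact ENNReal.div_le_div_right (K1 hf hx.1 hx.2.le) _
  · rintro ⟨hCes, hL1⟩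
    have hcesm : Measurable (cesaroAbs f) := measurable_cesaroAbs hf
    have key := copson hp hcesm hCes
    set T := ∫⁻ t in Ioo (0:ℝ) 1, ENNReal.ofReal |f t| with hTdef
    have hcesdivm : Measurable fun t => cesaroAbs f t / ENNReal.ofReal t :=
      hcesm.div (ENNReal.measurable_ofReal.comp measurable_id)
    have hinnerm : Measurable fun x =>
        (T ^ p + (∫⁻ t in Ioo x 1, cesaroAbs f t / ENNReal.ofReal t) ^ p) :=
      measurable_const.add ((measurable_section hcesdivm).pow measurable_const)
    calc ∫⁻ x in Ioo (0:ℝ) 1, copsonAbs f x ^ p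
        ≤ ∫⁻ x in Ioo (0:ℝ) 1, (2:ℝ≥0∞) ^ (p-1)
            * (T ^ p + (∫⁻ t in Ioo x 1, cesaroAbs f t / ENNReal.ofReal t) ^ p) := by
          refine lintegral_mono_ae ?_
          filter_upwards [ae_restrict_mem measurableSet_Ioo] with x hx
          calc copsonAbs f x ^ p
              ≤ (T + ∫⁻ t in Ioo x 1, cesaroAbs f t / ENNReal.ofReal t) ^ p :=
                ENNReal.rpow_le_rpow (K2 hf hx) (by linarith)
            _ ≤ (2:ℝ≥0∞) ^ (p-1)
                * (T ^ p + (∫⁻ t in Ioo x 1, cesaroAbs f t / ENNReal.ofReal t) ^ p) :=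
                ENNReal.rpow_add_le_mul_rpow_add_rpow _ _ hp.le
      _ = (2:ℝ≥0∞) ^ (p-1) * ∫⁻ x in Ioo (0:ℝ) 1,
            (T ^ p + (∫⁻ t in Ioo x 1, cesaroAbs f t / ENNReal.ofReal t) ^ p) :=
          lintegral_const_mul _ hinnerm
      _ < ⊤ := by
          refine ENNReal.mul_lt_top ?_ ?_
          · exact ENNReal.rpow_lt_top_of_nonneg (by linarith) (by norm_num)
          · rw [lintegral_add_left measurable_const]
            refine ENNReal.add_lt_top.mpr ⟨?_, key⟩
            have hTp : T ^ p < ⊤ := ENNReal.rpow_lt_top_of_nonneg (by linarith) hL1.ne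
            calc ∫⁻ _ in Ioo (0:ℝ) 1, T ^ p = T ^ p * volume (Ioo (0:ℝ) 1) := by
                  rw [lintegral_const, Measure.restrict_apply_univ]
              _ < ⊤ := ENNReal.mul_lt_top hTp (by simp [Real.volume_Ioo])
end

section
/- Let f(x) = (1−x)^{−2} for x ∈ (0,1). Then Cf(x) = 1/(1−x) for every x ∈ (0,1), and for every p with 1 ≤ p < ∞ one has Cf ∉ L^p(0,1) while C(Cf) ∈ L^p(0,1). In particular, for every 1 ≤ p < ∞ the function f belongs to the iterated Cesàro space CC(L^p)[0,1] but not to C(L^p)[0,1]. -/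
open MeasureTheory Set

/-- The Cesàro operator `Cf(x) = (1/x)∫_0^x f(t) dt`, with values in `[0,∞]`. -/
noncomputable def ces (f : ℝ → ENNReal) (x : ℝ) : ENNReal :=
  (∫⁻ t in Set.Ioo 0 x, f t) / ENNReal.ofReal x

/-- The function `f(x) = (1−x)^{−2}` on `(0,1)`. -/
noncomputable def f4 : ℝ → ENNReal := fun x => ENNReal.ofReal (1 / (1 - x) ^ 2)

lemma intInt1 {x : ℝ} (hx : x ∈ Ioo (0:ℝ) 1) :
    ∫ t in (0:ℝ)..x, 1 / (1-t)^2 = x / (1 - x) := by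
  obtain ⟨hx0, hx1⟩ := hx
  have key : ∫ t in (0:ℝ)..x, 1 / (1-t)^2 = (1-x)⁻¹ - (1-(0:ℝ))⁻¹ := by
    apply intervalIntegral.integral_eq_sub_of_hasDerivAt (f := fun t => (1-t)⁻¹)
    · intro t ht
      rw [uIcc_of_le hx0.le] at ht
      have h1t : 1 - t ≠ 0 := by nlinarith [ht.1, ht.2]
      have := (((hasDerivAt_id t).const_sub 1).inv h1t)
      convert this using 1
      · rfl
      · rfl
      · simp
    · apply ContinuousOn.intervalIntegrable
      apply ContinuousOn.div continuousOn_const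
      · fun_prop
      · intro t ht
        rw [uIcc_of_le hx0.le] at ht
        have : 1 - t ≠ 0 := by nlinarith [ht.1, ht.2]
        positivity
  rw [key]
  have h1x : 1 - x ≠ 0 := by linarith
  field_simp
  ring

lemma ces_f4_eq {x : ℝ} (hx : x ∈ Ioo (0:ℝ) 1) :
    ces f4 x = ENNReal.ofReal (1 / (1 - x)) := by
  obtain ⟨hx0, hx1⟩ := hx
  have hint : IntegrableOn (fun t => 1 / (1-t)^2) (Ioo 0 x) := by
    apply (ContinuousOn.integrableOn_Icc ?_).mono_set Ioo_subset_Icc_self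
    apply ContinuousOn.div continuousOn_const
    · fun_prop
    · intro t ht
      have : 1 - t ≠ 0 := by nlinarith [ht.1, ht.2]
      positivity
  have hnum : (∫⁻ t in Ioo 0 x, f4 t) = ENNReal.ofReal (x / (1 - x)) := by
    rw [show f4 = fun t => ENNReal.ofReal (1 / (1-t)^2) from rfl]
    rw [← ofReal_integral_eq_lintegral_ofReal hint]
    · congr 1
      rw [← integral_Ioc_eq_integral_Ioo, ← intervalIntegral.integral_of_le hx0.le]
      exact intInt1 ⟨hx0, hx1⟩
    · filter_upwards with t
      positivity
  rw [ces, hnum, ← ENNReal.ofReal_div_of_pos hx0]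
  congr 1
  have h1x : 1 - x ≠ 0 := by linarith
  field_simp

lemma intInt2 {x : ℝ} (hx0 : 0 ≤ x) (hx1 : x < 1) :
    ∫ t in (0:ℝ)..x, (1-t)⁻¹ = -Real.log (1 - x) := by
  have key : ∫ t in (0:ℝ)..x, (1-t)⁻¹ = (-Real.log (1-x)) - (-Real.log (1-(0:ℝ))) := by
    apply intervalIntegral.integral_eq_sub_of_hasDerivAt (f := fun t => -Real.log (1-t))
    · intro t ht
      rw [uIcc_of_le hx0] at ht
      have h1t : 1 - t ≠ 0 := by nlinarith [ht.1, ht.2]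
      have := (((Real.hasDerivAt_log h1t).comp t ((hasDerivAt_id t).const_sub 1))).neg
      convert this using 1
      · rfl
      · ring
    · apply ContinuousOn.intervalIntegrable
      apply ContinuousOn.inv₀ (by fun_prop)
      intro t ht
      rw [uIcc_of_le hx0] at ht
      nlinarith [ht.1, ht.2]
  simp [key]

lemma lint_inv_sub {x : ℝ} (hx0 : 0 ≤ x) (hx1 : x < 1) :
    (∫⁻ t in Ioo 0 x, ENNReal.ofReal ((1-t)⁻¹)) = ENNReal.ofReal (-Real.log (1-x)) := by
  have hint : IntegrableOn (fun t => (1-t)⁻¹) (Ioo 0 x) := by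
    apply (ContinuousOn.integrableOn_Icc ?_).mono_set Ioo_subset_Icc_self
    apply ContinuousOn.inv₀ (by fun_prop)
    intro t ht
    nlinarith [ht.1, ht.2]
  rw [← ofReal_integral_eq_lintegral_ofReal hint]
  · congr 1
    rw [← integral_Ioc_eq_integral_Ioo, ← intervalIntegral.integral_of_le hx0]
    exact intInt2 hx0 hx1
  · rw [Filter.EventuallyLE, ae_restrict_iff' measurableSet_Ioo]
    filter_upwards with t ht
    have : 0 < 1 - t := by linarith [ht.2, hx1]
    positivity

lemma ces_ces_f4_eq {x : ℝ} (hx : x ∈ Ioo (0:ℝ) 1) :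
    ces (ces f4) x = ENNReal.ofReal (-Real.log (1 - x) / x) := by
  obtain ⟨hx0, hx1⟩ := hx
  have hnum : (∫⁻ t in Ioo 0 x, ces f4 t) = ENNReal.ofReal (-Real.log (1-x)) := by
    rw [setLIntegral_congr_fun measurableSet_Ioo
      (g := fun t => ENNReal.ofReal ((1-t)⁻¹)) ?_]
    · exact lint_inv_sub hx0.le hx1
    · intro t ht
      rw [ces_f4_eq ⟨ht.1, ht.2.trans hx1⟩, one_div]
  rw [ces, hnum, ENNReal.ofReal_div_of_pos hx0]

-- divergence
lemma div_top : (∫⁻ x in Ioo (0:ℝ) 1, ENNReal.ofReal ((1-x)⁻¹)) = ⊤ := by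
  apply ENNReal.eq_top_of_forall_nnreal_le
  intro r
  set a : ℝ := 1 - Real.exp (-(r:ℝ)) with ha
  have he : Real.exp (-(r:ℝ)) ≤ 1 := Real.exp_le_one_iff.mpr (by simp)
  have ha0 : 0 ≤ a := by simp only [ha, sub_nonneg]; exact he
  have ha1 : a < 1 := by
    simp only [ha, sub_lt_self_iff]; exact Real.exp_pos _
  calc (r : ENNReal) = ENNReal.ofReal (-Real.log (1-a)) := by
        rw [ha]; simp [Real.log_exp, ENNReal.ofReal_coe_nnreal]
    _ = ∫⁻ x in Ioo 0 a, ENNReal.ofReal ((1-x)⁻¹) := (lint_inv_sub ha0 ha1).symm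
    _ ≤ _ := lintegral_mono_set (Ioo_subset_Ioo le_rfl ha1.le)

lemma lhs_top {p : ℝ} (hp : 1 ≤ p) :
    (∫⁻ x in Ioo (0:ℝ) 1, ces f4 x ^ p) = ⊤ := by
  rw [eq_top_iff, ← div_top]
  apply lintegral_mono_ae
  rw [ae_restrict_iff' measurableSet_Ioo]
  filter_upwards with x hx
  rw [ces_f4_eq hx, one_div]
  have h1x : (0:ℝ) < 1 - x := by linarith [hx.2]
  have h1 : 1 ≤ ENNReal.ofReal (1-x)⁻¹ := by
    rw [ENNReal.one_le_ofReal, le_inv_comm₀ one_pos h1x]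
    simp; linarith [hx.1]
  calc ENNReal.ofReal (1-x)⁻¹ = ENNReal.ofReal (1-x)⁻¹ ^ (1:ℝ) := (ENNReal.rpow_one _).symm
    _ ≤ _ := ENNReal.rpow_le_rpow_of_exponent_le h1 hp

-- real pointwise bound
lemma real_bound {p x : ℝ} (hp : 1 ≤ p) (hx : x ∈ Ioo (0:ℝ) 1) :
    -Real.log (1-x) / x ≤ 2*(1+2*p) * (1-x) ^ (-(1/(2*p))) := by
  obtain ⟨hx0, hx1⟩ := hx
  have h1x : (0:ℝ) < 1 - x := by linarith
  have hp0 : (0:ℝ) < p := by linarith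
  set u : ℝ := (1-x) ^ (-(1/(2*p))) with hu
  have hu1 : 1 ≤ u := Real.one_le_rpow_of_pos_of_le_one_of_nonpos h1x (by linarith)
    (by rw [neg_nonpos]; positivity)
  have hlogu : Real.log u = -(1/(2*p)) * Real.log (1-x) := Real.log_rpow h1x _
  have hlog : -Real.log (1-x) ≤ 2*p*u := by
    have h2 := Real.log_le_sub_one_of_pos (show (0:ℝ) < u by linarith)
    rw [hlogu] at h2
    have : -(1/(2*p)) * Real.log (1-x) ≤ u := by linarith
    calc -Real.log (1-x) = 2*p * (-(1/(2*p)) * Real.log (1-x)) := by field_simp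
      _ ≤ 2*p*u := by nlinarith
  have hlogneg : Real.log (1-x) ≤ 0 := Real.log_nonpos (by linarith) (by linarith)
  have hmain : -Real.log (1-x) / x ≤ 2 - 2*Real.log (1-x) := by
    rcases le_or_gt (1/2) x with h | h
    · have hxi : 1/x ≤ 2 := by rw [div_le_iff₀ hx0]; linarith
      rw [div_le_iff₀ hx0]
      nlinarith
    · have h3 := Real.log_le_sub_one_of_pos (show (0:ℝ) < (1-x)⁻¹ by positivity)
      rw [Real.log_inv] at h3
      have h4 : (1-x)⁻¹ ≤ 2 := by
        rw [inv_le_comm₀ h1x (by norm_num)]; linarith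
      have h5 : -Real.log (1-x) / x ≤ (1-x)⁻¹ := by
        rw [div_le_iff₀ hx0]
        have : (1-x)⁻¹ - 1 = x * (1-x)⁻¹ := by field_simp; ring
        nlinarith [this, mul_le_mul_of_nonneg_left h4 hx0.le]
      linarith
  calc -Real.log (1-x) / x ≤ 2 - 2*Real.log (1-x) := hmain
    _ ≤ 2*u + 2*(2*p*u) := by nlinarith
    _ = 2*(1+2*p) * u := by ring

-- integrability of (1-x)^(-1/2) on Ioo 0 1
lemma int_half : IntegrableOn (fun x : ℝ => (1-x) ^ (-(1/2):ℝ)) (Ioo 0 1) := by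
  have h := (intervalIntegral.intervalIntegrable_rpow' (a := 0) (b := 1)
    (r := -(1/2)) (by norm_num)).comp_sub_left 1
  simp only [sub_zero, sub_self] at h
  exact (intervalIntegrable_iff_integrableOn_Ioo_of_le (by norm_num : (0:ℝ) ≤ 1)).mp h.symm

lemma rhs_fin {p : ℝ} (hp : 1 ≤ p) :
    (∫⁻ x in Ioo (0:ℝ) 1, ces (ces f4) x ^ p) < ⊤ := by
  have hp0 : (0:ℝ) < p := by linarith
  set C : ℝ := (2*(1+2*p)) ^ p with hC
  have hC0 : 0 ≤ C := Real.rpow_nonneg (by linarith) _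
  have step1 : (∫⁻ x in Ioo (0:ℝ) 1, ces (ces f4) x ^ p)
      ≤ ∫⁻ x in Ioo (0:ℝ) 1, ENNReal.ofReal C * ENNReal.ofReal ((1-x) ^ (-(1/2):ℝ)) := by
    apply lintegral_mono_ae
    rw [ae_restrict_iff' measurableSet_Ioo]
    filter_upwards with x hx
    obtain ⟨hx0, hx1⟩ := hx
    have h1x : (0:ℝ) < 1 - x := by linarith
    have hbase : 0 ≤ -Real.log (1-x) / x := by
      apply div_nonneg _ hx0.le
      simp only [neg_nonneg]
      exact Real.log_nonpos (by linarith) (by linarith)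
    rw [ces_ces_f4_eq ⟨hx0, hx1⟩, ENNReal.ofReal_rpow_of_nonneg hbase hp0.le,
      ← ENNReal.ofReal_mul hC0]
    apply ENNReal.ofReal_le_ofReal
    calc (-Real.log (1-x) / x) ^ p
        ≤ (2*(1+2*p) * (1-x) ^ (-(1/(2*p)))) ^ p := by
          apply Real.rpow_le_rpow hbase (real_bound hp ⟨hx0, hx1⟩) hp0.le
      _ = C * (1-x) ^ (-(1/2):ℝ) := by
          rw [Real.mul_rpow (by linarith) (Real.rpow_nonneg h1x.le _),
            ← Real.rpow_mul h1x.le]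
          have hexp : -(1/(2*p)) * p = (-(1/2) : ℝ) := by field_simp
          rw [hexp]
  have step2 : (∫⁻ x in Ioo (0:ℝ) 1, ENNReal.ofReal C * ENNReal.ofReal ((1-x) ^ (-(1/2):ℝ)))
      = ENNReal.ofReal C * ENNReal.ofReal (∫ x in Ioo (0:ℝ) 1, (1-x) ^ (-(1/2):ℝ)) := by
    rw [lintegral_const_mul' _ _ ENNReal.ofReal_ne_top]
    congr 1
    rw [← ofReal_integral_eq_lintegral_ofReal int_half]
    rw [Filter.EventuallyLE, ae_restrict_iff' measurableSet_Ioo]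
    filter_upwards with x hx
    have h1x : (0:ℝ) < 1 - x := by linarith [hx.2]
    exact Real.rpow_nonneg h1x.le _
  calc (∫⁻ x in Ioo (0:ℝ) 1, ces (ces f4) x ^ p) ≤ _ := step1
    _ = _ := step2
    _ < ⊤ := ENNReal.mul_lt_top ENNReal.ofReal_lt_top ENNReal.ofReal_lt_top

/-- For `f(x) = (1−x)^{−2}` on `(0,1)`: `Cf(x) = 1/(1−x)` on `(0,1)`, and for every
`1 ≤ p < ∞`, `Cf ∉ L^p(0,1)` while `C(Cf) ∈ L^p(0,1)`; that is, `f ∈ CC(L^p)[0,1]`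
but `f ∉ C(L^p)[0,1]`. -/
theorem stmt4 :
    (∀ x ∈ Set.Ioo (0:ℝ) 1, ces f4 x = ENNReal.ofReal (1 / (1 - x))) ∧
    ∀ p : ℝ, 1 ≤ p →
      ¬ ((∫⁻ x in Set.Ioo (0:ℝ) 1, ces f4 x ^ p) < ⊤) ∧
      (∫⁻ x in Set.Ioo (0:ℝ) 1, ces (ces f4) x ^ p) < ⊤ := by
  refine ⟨fun x hx => ces_f4_eq hx, fun p hp => ⟨?_, rhs_fin hp⟩⟩
  rw [lhs_top hp]
  exact lt_irrefl ⊤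
end

section
/- Let φ : [0,∞) × [0,∞) → [0,∞) be concave, continuous, positively homogeneous, and not identically zero on (0,∞)². Let f₀, f₁ : (0,∞) → ℝ be measurable. Then for every x > 0, the decreasing rearrangement (with respect to Lebesgue measure on (0,∞)) satisfies (φ(|f₀|, |f₁|))^*(x) ≤ φ(f₀^*(x/2), f₁^*(x/2)), where a value of +∞ of a rearrangement is allowed on the right-hand side (with φ extended to [0,∞]² by increasing limits). -/
open MeasureTheory Set

/-- The decreasing rearrangement (w.r.t. Lebesgue measure on `(0,∞)`):
`f^*(t) = inf{λ > 0 : m({x ∈ (0,∞) : |f(x)| > λ}) ≤ t}`, with values in `[0,∞]`. -/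
noncomputable def rearr (f : ℝ → ℝ) (t : ℝ) : ENNReal :=
  sInf {l : ENNReal |
    MeasureTheory.volume {x ∈ Set.Ioi (0:ℝ) | l < ENNReal.ofReal |f x|} ≤ ENNReal.ofReal t}

/-- The extension of `φ` to `[0,∞]²` by increasing limits. -/
noncomputable def ephi (φ : ℝ → ℝ → ℝ) (s t : ENNReal) : ENNReal :=
  ⨆ (a : NNReal) (b : NNReal) (_ : (a : ENNReal) ≤ s) (_ : (b : ENNReal) ≤ t),
    ENNReal.ofReal (φ a b)

/-- The infimum defining the rearrangement is attained. -/
lemma rearr_mem (f : ℝ → ℝ) (t : ℝ) :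
    MeasureTheory.volume {y ∈ Set.Ioi (0:ℝ) | rearr f t < ENNReal.ofReal |f y|}
      ≤ ENNReal.ofReal t := by
  set S : Set ENNReal := {l : ENNReal |
    MeasureTheory.volume {x ∈ Set.Ioi (0:ℝ) | l < ENNReal.ofReal |f x|} ≤ ENNReal.ofReal t}
    with hS
  set r : ENNReal := rearr f t with hr
  have hrS : r = sInf S := rfl
  -- upward closedness implies: anything strictly above `r` is in `S`
  have hup : ∀ l : ENNReal, r < l → l ∈ S := by
    intro l hl
    rw [hrS, sInf_lt_iff] at hl
    obtain ⟨l', hl'S, hl'⟩ := hl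
    refine le_trans (measure_mono ?_) hl'S
    intro y hy
    exact ⟨hy.1, lt_trans hl' hy.2⟩
  rcases eq_or_lt_of_le (le_top : r ≤ ⊤) with htop | hlt
  · have he : {y ∈ Set.Ioi (0:ℝ) | r < ENNReal.ofReal |f y|} = ∅ :=
      Set.eq_empty_of_forall_notMem (fun y hy => not_top_lt (htop ▸ hy.2))
    rw [he]
    simp
  -- approximate from above along `r + (n : ℝ≥0∞)⁻¹`
  have hseq : {y ∈ Set.Ioi (0:ℝ) | r < ENNReal.ofReal |f y|}
      = ⋃ n : ℕ, {y ∈ Set.Ioi (0:ℝ) | r + ((n : ENNReal))⁻¹ < ENNReal.ofReal |f y|} := by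
    ext y
    simp only [Set.mem_setOf_eq, Set.mem_iUnion]
    constructor
    · rintro ⟨hy0, hy⟩
      have hfin : ENNReal.ofReal |f y| ≠ ⊤ := ENNReal.ofReal_ne_top
      have hsub : (0 : ENNReal) < ENNReal.ofReal |f y| - r := by
        exact tsub_pos_of_lt hy
      obtain ⟨n, hn⟩ := ENNReal.exists_inv_nat_lt (ne_of_gt hsub)
      refine ⟨n, hy0, ?_⟩
      have : r + ((n : ENNReal))⁻¹ < r + (ENNReal.ofReal |f y| - r) :=
        ENNReal.add_lt_add_left (ne_of_lt hlt) hn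
      rwa [add_tsub_cancel_of_le (le_of_lt hy)] at this
    · rintro ⟨n, hy0, hy⟩
      exact ⟨hy0, lt_of_le_of_lt (le_add_right le_rfl) hy⟩
  rw [hseq]
  have hmono : Monotone (fun n : ℕ =>
      {y ∈ Set.Ioi (0:ℝ) | r + ((n : ENNReal))⁻¹ < ENNReal.ofReal |f y|}) := by
    intro n m hnm y hy
    refine ⟨hy.1, lt_of_le_of_lt (add_le_add (le_refl r) ?_) hy.2⟩
    exact ENNReal.inv_le_inv.mpr (by exact_mod_cast hnm)
  rw [Directed.measure_iUnion hmono.directed_le]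
  refine iSup_le fun n => ?_
  apply hup
  have hinv : ((n : ENNReal))⁻¹ ≠ 0 := by
    simp [ENNReal.inv_ne_zero]
  exact ENNReal.lt_add_right (ne_of_lt hlt) hinv

/-- If `φ : [0,∞)² → [0,∞)` is concave, continuous, positively homogeneous and not
identically zero on `(0,∞)²`, and `f₀, f₁ : (0,∞) → ℝ` are measurable, then for every
`x > 0`: `(φ(|f₀|, |f₁|))^*(x) ≤ φ(f₀^*(x/2), f₁^*(x/2))`, the right-hand side understood
via the extension of `φ` to `[0,∞]²` by increasing limits. -/
theorem stmt8 (φ : ℝ → ℝ → ℝ)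
    (hconc : ConcaveOn ℝ (Set.Ici 0 ×ˢ Set.Ici 0) (fun q : ℝ × ℝ => φ q.1 q.2))
    (hcont : ContinuousOn (fun q : ℝ × ℝ => φ q.1 q.2) (Set.Ici 0 ×ˢ Set.Ici 0))
    (hhom : ∀ l s t : ℝ, 0 ≤ l → 0 ≤ s → 0 ≤ t → φ (l * s) (l * t) = l * φ s t)
    (hnn : ∀ s t : ℝ, 0 ≤ s → 0 ≤ t → 0 ≤ φ s t)
    (hnz : ∃ s t : ℝ, 0 < s ∧ 0 < t ∧ 0 < φ s t)
    (f₀ f₁ : ℝ → ℝ) (hm0 : Measurable f₀) (hm1 : Measurable f₁)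
    (x : ℝ) (hx : 0 < x) :
    rearr (fun y => φ |f₀ y| |f₁ y|) x ≤ ephi φ (rearr f₀ (x / 2)) (rearr f₁ (x / 2)) := by
  set r₀ : ENNReal := rearr f₀ (x / 2) with hr₀
  set r₁ : ENNReal := rearr f₁ (x / 2) with hr₁
  set L : ENNReal := ephi φ r₀ r₁ with hL
  apply sInf_le
  show MeasureTheory.volume
      {y ∈ Set.Ioi (0:ℝ) | L < ENNReal.ofReal (abs (φ (abs (f₀ y)) (abs (f₁ y))))}
        ≤ ENNReal.ofReal x
  have hsub : {y ∈ Set.Ioi (0:ℝ) | L < ENNReal.ofReal (abs (φ (abs (f₀ y)) (abs (f₁ y))))}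
      ⊆ {y ∈ Set.Ioi (0:ℝ) | r₀ < ENNReal.ofReal |f₀ y|}
        ∪ {y ∈ Set.Ioi (0:ℝ) | r₁ < ENNReal.ofReal |f₁ y|} := by
    rintro y ⟨hy0, hy⟩
    by_contra hcon
    rw [Set.mem_union] at hcon
    push_neg at hcon
    obtain ⟨h0, h1⟩ := hcon
    have ha : (((|f₀ y|).toNNReal : ENNReal)) ≤ r₀ := by
      rw [← ENNReal.ofReal]
      exact not_lt.mp (fun h => (h0 ⟨hy0, h⟩))
    have hb : (((|f₁ y|).toNNReal : ENNReal)) ≤ r₁ := by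
      rw [← ENNReal.ofReal]
      exact not_lt.mp (fun h => (h1 ⟨hy0, h⟩))
    have hle : ENNReal.ofReal (φ ((|f₀ y|).toNNReal) ((|f₁ y|).toNNReal)) ≤ L := by
      rw [hL, ephi]
      exact le_iSup_of_le (|f₀ y|).toNNReal <| le_iSup_of_le (|f₁ y|).toNNReal <|
        le_iSup_of_le ha <| le_iSup_of_le hb le_rfl
    rw [Real.coe_toNNReal _ (abs_nonneg _), Real.coe_toNNReal _ (abs_nonneg _)] at hle
    have habs : abs (φ (abs (f₀ y)) (abs (f₁ y))) = φ |f₀ y| |f₁ y| :=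
      abs_of_nonneg (hnn _ _ (abs_nonneg _) (abs_nonneg _))
    rw [habs] at hy
    exact absurd hy (not_lt.mpr hle)
  calc (MeasureTheory.volume
        {y ∈ Set.Ioi (0:ℝ) | L < ENNReal.ofReal (abs (φ (abs (f₀ y)) (abs (f₁ y))))})
      ≤ MeasureTheory.volume ({y ∈ Set.Ioi (0:ℝ) | r₀ < ENNReal.ofReal |f₀ y|}
          ∪ {y ∈ Set.Ioi (0:ℝ) | r₁ < ENNReal.ofReal |f₁ y|}) := measure_mono hsub
    _ ≤ MeasureTheory.volume {y ∈ Set.Ioi (0:ℝ) | r₀ < ENNReal.ofReal |f₀ y|}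
          + MeasureTheory.volume {y ∈ Set.Ioi (0:ℝ) | r₁ < ENNReal.ofReal |f₁ y|} :=
        measure_union_le _ _
    _ ≤ ENNReal.ofReal (x / 2) + ENNReal.ofReal (x / 2) :=
        add_le_add (rearr_mem f₀ (x / 2)) (rearr_mem f₁ (x / 2))
    _ = ENNReal.ofReal x := by
        rw [← ENNReal.ofReal_add (by linarith) (by linarith)]
        norm_num
end

section
/- Let φ : [0,∞) × [0,∞) → [0,∞) be concave, continuous, positively homogeneous, and not identically zero on (0,∞)². Let f₀, f₁ : (0,∞) → [0,∞) be measurable and let x > 0 be such that C(C*f₀)(x) < ∞ and C(C*f₁)(x) < ∞. Then C(C*[φ(f₀, f₁)])(x) ≤ φ(C(C*f₀)(x), C(C*f₁)(x)). -/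
open MeasureTheory Set

/-- The Copson operator `C*f(x) = ∫_x^∞ f(t)/t dt`, with values in `[0,∞]`. -/
noncomputable def cop (f : ℝ → ENNReal) (x : ℝ) : ENNReal :=
  ∫⁻ t in Set.Ioi x, f t / ENNReal.ofReal t

open Filter Topology in
private lemma line1D {g : ℝ → ℝ} (hg : ConcaveOn ℝ (Set.Ici 0) g)
    (hgc : ContinuousOn g (Set.Ici 0)) (hg0 : ∀ u, 0 ≤ u → 0 ≤ g u)
    {u₀ : ℝ} (hu₀ : 0 ≤ u₀) {ε : ℝ} (hε : 0 < ε) :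
    ∃ A B : ℝ, 0 ≤ A ∧ 0 ≤ B ∧ (∀ u, 0 ≤ u → g u ≤ A + B * u) ∧ A + B * u₀ ≤ g u₀ + ε := by
  obtain ⟨δ, hδ, hδε⟩ : ∃ δ > 0, ∀ u ∈ Ici (0:ℝ), dist u u₀ < δ → dist (g u) (g u₀) < ε := by
    have := hgc u₀ (mem_Ici.2 hu₀)
    rw [Metric.continuousWithinAt_iff] at this
    exact this ε hε
  set c : ℝ := (g (u₀ + δ) - g u₀) / δ with hc
  have hmem : ∀ u : ℝ, 0 ≤ u → u ∈ Ici (0:ℝ) := fun u hu => mem_Ici.2 hu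
  -- key inequality for u ≥ u₀ + δ
  have key1 : ∀ u, u₀ + δ ≤ u → g u ≤ g u₀ + c * (u - u₀) := by
    intro u hu
    have hupos : (0:ℝ) < u - u₀ := by linarith
    set l : ℝ := δ / (u - u₀) with hl
    have hl0 : 0 < l := div_pos hδ hupos
    have hl1 : l ≤ 1 := (div_le_one hupos).2 (by linarith)
    have hcomb := hg.2 (hmem u₀ hu₀) (hmem u (by linarith)) (by linarith : (0:ℝ) ≤ 1 - l)
      (le_of_lt hl0) (by ring)
    have hld : l * (u - u₀) = δ := by rw [hl]; exact div_mul_cancel₀ _ (ne_of_gt hupos)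
    have hpt : (1 - l) • u₀ + l • u = u₀ + δ := by
      simp only [smul_eq_mul]; nlinarith [hld]
    rw [hpt] at hcomb
    simp only [smul_eq_mul] at hcomb
    have scaled := mul_le_mul_of_nonneg_right hcomb (le_of_lt hupos)
    have e1 : l * (u - u₀) * g u = δ * g u := by rw [hld]
    have e2 : l * (u - u₀) * g u₀ = δ * g u₀ := by rw [hld]
    rw [hc, div_mul_eq_mul_div, ← sub_le_iff_le_add', le_div_iff₀ hδ]
    nlinarith [scaled, e1, e2]
  -- key inequality for u ≤ u₀
  have key2 : ∀ u, 0 ≤ u → u ≤ u₀ → g u ≤ g u₀ + c * (u - u₀) := by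
    intro u hu hle
    rcases eq_or_lt_of_le hle with h | h
    · subst h; simp
    set D : ℝ := u₀ + δ - u with hD
    have hD0 : 0 < D := by simp only [hD]; linarith
    set a : ℝ := δ / D with ha
    have ha0 : 0 < a := div_pos hδ hD0
    have ha1 : a ≤ 1 := (div_le_one hD0).2 (by simp only [hD]; linarith)
    have hcomb := hg.2 (hmem u hu) (hmem (u₀ + δ) (by linarith)) (le_of_lt ha0)
      (by linarith : (0:ℝ) ≤ 1 - a) (by ring)
    have haD : a * D = δ := by rw [ha]; exact div_mul_cancel₀ _ (ne_of_gt hD0)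
    have hpt : a • u + (1 - a) • (u₀ + δ) = u₀ := by
      simp only [smul_eq_mul]; nlinarith [haD]
    rw [hpt] at hcomb
    simp only [smul_eq_mul] at hcomb
    have scaled := mul_le_mul_of_nonneg_right hcomb (le_of_lt hD0)
    have e1 : a * D * g u = δ * g u := by rw [haD]
    have e2 : a * D * g (u₀ + δ) = δ * g (u₀ + δ) := by rw [haD]
    have e3 : g u₀ * D = g u₀ * (u₀ + δ - u) := by rw [hD]
    have e4 : g (u₀ + δ) * D = g (u₀ + δ) * (u₀ + δ - u) := by rw [hD]
    rw [hc, div_mul_eq_mul_div, ← sub_le_iff_le_add', le_div_iff₀ hδ]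
    nlinarith [scaled, e1, e2, e3, e4]
  -- c is nonnegative
  have hcnn : 0 ≤ c := by
    by_contra hneg
    push_neg at hneg
    set u : ℝ := u₀ + δ + (g u₀ + 1) / (-c) with hu
    have hgu0 : 0 ≤ g u₀ := hg0 u₀ hu₀
    have hq : 0 < (g u₀ + 1) / (-c) := div_pos (by linarith) (by linarith)
    have h1 := key1 u (by rw [hu]; linarith)
    have hcne : -c ≠ 0 := by intro hh; linarith [neg_eq_zero.1 hh]
    have h2 : c * ((g u₀ + 1) / (-c)) = -(g u₀ + 1) := by
      field_simp
      ring_nf; rw [mul_inv_cancel₀ (ne_of_lt hneg)]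
    have h3 : g u ≤ g u₀ + c * δ + c * ((g u₀ + 1) / (-c)) := by
      calc g u ≤ g u₀ + c * (u - u₀) := h1
        _ = g u₀ + c * δ + c * ((g u₀ + 1) / (-c)) := by rw [hu]; ring
    have h4 : g u ≤ c * δ - 1 := by rw [h2] at h3; linarith
    have := hg0 u (by rw [hu]; positivity)
    nlinarith [mul_pos (neg_pos.2 hneg) hδ]
  -- assemble
  refine ⟨g u₀ + ε - c * u₀, c, ?_, hcnn, ?_, by linarith⟩
  · have h0 := key2 0 le_rfl hu₀
    have := hg0 0 le_rfl
    nlinarith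
  · intro u hu
    rcases le_or_gt u u₀ with h | h
    · have := key2 u hu h
      linarith
    rcases le_or_gt (u₀ + δ) u with h' | h'
    · have := key1 u h'
      linarith
    · have := hδε u (hmem u hu) (by rw [Real.dist_eq, abs_lt]; constructor <;> linarith)
      rw [Real.dist_eq] at this
      have h1 : g u - g u₀ < ε := (abs_lt.1 this).2
      nlinarith [mul_nonneg hcnn (sub_nonneg.2 h.le)]


open Filter Topology in
private lemma line2D_pos (φ : ℝ → ℝ → ℝ)
    (hconc : ConcaveOn ℝ (Set.Ici 0 ×ˢ Set.Ici 0) (fun q : ℝ × ℝ => φ q.1 q.2))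
    (hcont : ContinuousOn (fun q : ℝ × ℝ => φ q.1 q.2) (Set.Ici 0 ×ˢ Set.Ici 0))
    (hhom : ∀ l s t : ℝ, 0 ≤ l → 0 ≤ s → 0 ≤ t → φ (l * s) (l * t) = l * φ s t)
    (hnn : ∀ s t : ℝ, 0 ≤ s → 0 ≤ t → 0 ≤ φ s t)
    {s₀ t₀ : ℝ} (hs₀ : 0 < s₀) (ht₀ : 0 ≤ t₀) {ε : ℝ} (hε : 0 < ε) :
    ∃ α β : ℝ, 0 ≤ α ∧ 0 ≤ β ∧ (∀ s t, 0 ≤ s → 0 ≤ t → φ s t ≤ α * s + β * t) ∧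
      α * s₀ + β * t₀ ≤ φ s₀ t₀ + ε := by
  set g : ℝ → ℝ := fun u => φ 1 u with hgdef
  have hgconc : ConcaveOn ℝ (Set.Ici 0) g := by
    refine ⟨convex_Ici 0, fun u hu v hv a b ha hb hab => ?_⟩
    have := hconc.2 (x := (1, u)) ⟨mem_Ici.2 zero_le_one, hu⟩
      (y := (1, v)) ⟨mem_Ici.2 zero_le_one, hv⟩ ha hb hab
    simp only [Prod.smul_mk, Prod.mk_add_mk, smul_eq_mul, mul_one] at this
    simpa [hgdef, hab] using this
  have hgc : ContinuousOn g (Set.Ici 0) := by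
    have : Continuous (fun u : ℝ => ((1:ℝ), u)) := continuous_const.prodMk continuous_id
    exact hcont.comp this.continuousOn (fun u hu => ⟨mem_Ici.2 zero_le_one, hu⟩)
  have hg0 : ∀ u, 0 ≤ u → 0 ≤ g u := fun u hu => hnn 1 u zero_le_one hu
  have hu₀ : (0:ℝ) ≤ t₀ / s₀ := div_nonneg ht₀ hs₀.le
  have hε' : 0 < ε / s₀ := div_pos hε hs₀
  obtain ⟨A, B, hA, hB, hmaj, hval⟩ := line1D hgconc hgc hg0 hu₀ hε'
  -- majorization for positive first argument
  have hpos : ∀ s t : ℝ, 0 < s → 0 ≤ t → φ s t ≤ A * s + B * t := by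
    intro s t hs ht
    have h1 : φ s t = s * g (t / s) := by
      have := hhom s 1 (t / s) hs.le zero_le_one (div_nonneg ht hs.le)
      rwa [mul_one, mul_div_cancel₀ _ (ne_of_gt hs)] at this
    have h2 : g (t / s) ≤ A + B * (t / s) := hmaj _ (div_nonneg ht hs.le)
    rw [h1]
    calc s * g (t / s) ≤ s * (A + B * (t / s)) := by
          exact mul_le_mul_of_nonneg_left h2 hs.le
      _ = A * s + B * (s * (t / s)) := by ring
      _ = A * s + B * t := by rw [mul_div_cancel₀ _ (ne_of_gt hs)]
  -- boundary: φ 0 1 ≤ B by continuity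
  have hB1 : φ 0 1 ≤ B := by
    have hlim : Tendsto (fun s : ℝ => φ s 1) (𝓝[>] (0:ℝ)) (𝓝 (φ 0 1)) := by
      have hcc : ContinuousOn (fun s : ℝ => φ s 1) (Set.Ici 0) := by
        have : Continuous (fun s : ℝ => (s, (1:ℝ))) := continuous_id.prodMk continuous_const
        exact hcont.comp this.continuousOn (fun s hs => ⟨hs, mem_Ici.2 zero_le_one⟩)
      exact (hcc 0 (mem_Ici.2 le_rfl)).mono Ioi_subset_Ici_self
    have hlin : Tendsto (fun s : ℝ => A * s + B * 1) (𝓝[>] (0:ℝ)) (𝓝 B) := by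
      have h : Tendsto (fun s : ℝ => A * s + B * 1) (𝓝 (0:ℝ)) (𝓝 (A * 0 + B * 1)) :=
        Tendsto.add (tendsto_const_nhds.mul tendsto_id) tendsto_const_nhds
      simpa using h.mono_left nhdsWithin_le_nhds
    exact le_of_tendsto_of_tendsto hlim hlin
      (eventually_nhdsWithin_of_forall (fun s hs => hpos s 1 hs zero_le_one))
  refine ⟨A, B, hA, hB, ?_, ?_⟩
  · intro s t hs ht
    rcases eq_or_lt_of_le hs with h | h
    · subst h
      have h1 : φ 0 t = t * φ 0 1 := by
        have := hhom t 0 1 ht le_rfl zero_le_one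
        simpa using this
      rw [h1]
      have : t * φ 0 1 ≤ t * B := mul_le_mul_of_nonneg_left hB1 ht
      linarith [this]
    · exact hpos s t h ht
  · have h1 : φ s₀ t₀ = s₀ * g (t₀ / s₀) := by
      have := hhom s₀ 1 (t₀ / s₀) hs₀.le zero_le_one hu₀
      rwa [mul_one, mul_div_cancel₀ _ (ne_of_gt hs₀)] at this
    have h2 : s₀ * (A + B * (t₀ / s₀)) ≤ s₀ * (g (t₀ / s₀) + ε / s₀) :=
      mul_le_mul_of_nonneg_left hval hs₀.le
    have h3 : s₀ * (A + B * (t₀ / s₀)) = A * s₀ + B * t₀ := by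
      field_simp
    have h4 : s₀ * (g (t₀ / s₀) + ε / s₀) = s₀ * g (t₀ / s₀) + ε := by
      field_simp
    rw [h1]; linarith [h2, h3, h4]

lemma line2D (φ : ℝ → ℝ → ℝ)
    (hconc : ConcaveOn ℝ (Set.Ici 0 ×ˢ Set.Ici 0) (fun q : ℝ × ℝ => φ q.1 q.2))
    (hcont : ContinuousOn (fun q : ℝ × ℝ => φ q.1 q.2) (Set.Ici 0 ×ˢ Set.Ici 0))
    (hhom : ∀ l s t : ℝ, 0 ≤ l → 0 ≤ s → 0 ≤ t → φ (l * s) (l * t) = l * φ s t)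
    (hnn : ∀ s t : ℝ, 0 ≤ s → 0 ≤ t → 0 ≤ φ s t)
    {s₀ t₀ : ℝ} (hs₀ : 0 ≤ s₀) (ht₀ : 0 ≤ t₀) {ε : ℝ} (hε : 0 < ε) :
    ∃ α β : ℝ, 0 ≤ α ∧ 0 ≤ β ∧ (∀ s t, 0 ≤ s → 0 ≤ t → φ s t ≤ α * s + β * t) ∧
      α * s₀ + β * t₀ ≤ φ s₀ t₀ + ε := by
  -- swapped hypotheses
  set ψ : ℝ → ℝ → ℝ := fun s t => φ t s with hψ
  have hconc' : ConcaveOn ℝ (Set.Ici 0 ×ˢ Set.Ici 0) (fun q : ℝ × ℝ => ψ q.1 q.2) := by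
    refine ⟨(convex_Ici (0:ℝ)).prod (convex_Ici 0), fun p hp q hq a b ha hb hab => ?_⟩
    have := hconc.2 (x := (p.2, p.1)) ⟨hp.2, hp.1⟩ (y := (q.2, q.1)) ⟨hq.2, hq.1⟩ ha hb hab
    simpa [hψ, Prod.smul_mk, Prod.mk_add_mk] using this
  have hcont' : ContinuousOn (fun q : ℝ × ℝ => ψ q.1 q.2) (Set.Ici 0 ×ˢ Set.Ici 0) := by
    have hsw : Continuous (fun q : ℝ × ℝ => (q.2, q.1)) := continuous_snd.prodMk continuous_fst
    exact hcont.comp hsw.continuousOn (fun q hq => ⟨hq.2, hq.1⟩)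
  have hhom' : ∀ l s t : ℝ, 0 ≤ l → 0 ≤ s → 0 ≤ t → ψ (l * s) (l * t) = l * ψ s t :=
    fun l s t hl hs ht => hhom l t s hl ht hs
  have hnn' : ∀ s t : ℝ, 0 ≤ s → 0 ≤ t → 0 ≤ ψ s t := fun s t hs ht => hnn t s ht hs
  rcases lt_or_eq_of_le hs₀ with h | h
  · exact line2D_pos φ hconc hcont hhom hnn h ht₀ hε
  rcases lt_or_eq_of_le ht₀ with h' | h'
  · obtain ⟨α, β, hα, hβ, hmaj, hval⟩ := line2D_pos ψ hconc' hcont' hhom' hnn' h' (le_of_eq h) hε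
    refine ⟨β, α, hβ, hα, fun s t hs ht => ?_, ?_⟩
    · have := hmaj t s ht hs; simp only [hψ] at this; linarith
    · have := hval; simp only [hψ] at this; linarith
  · -- s₀ = t₀ = 0
    obtain ⟨α, β, hα, hβ, hmaj, _⟩ := line2D_pos φ hconc hcont hhom hnn one_pos zero_le_one hε
    have h00 : φ 0 0 = 0 := by
      have := hhom 0 1 1 le_rfl zero_le_one zero_le_one
      simpa using this
    refine ⟨α, β, hα, hβ, hmaj, ?_⟩
    rw [← h, ← h', h00]
    simpa using hε.le


/-- If `φ : [0,∞)² → [0,∞)` is concave, continuous, positively homogeneous and not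
identically zero on `(0,∞)²`, `f₀, f₁ : (0,∞) → [0,∞)` are measurable, and `x > 0` with
`C(C*f₀)(x) < ∞`, `C(C*f₁)(x) < ∞`, then
`C(C*[φ(f₀,f₁)])(x) ≤ φ(C(C*f₀)(x), C(C*f₁)(x))`. -/
theorem stmt9 (φ : ℝ → ℝ → ℝ)
    (hconc : ConcaveOn ℝ (Set.Ici 0 ×ˢ Set.Ici 0) (fun q : ℝ × ℝ => φ q.1 q.2))
    (hcont : ContinuousOn (fun q : ℝ × ℝ => φ q.1 q.2) (Set.Ici 0 ×ˢ Set.Ici 0))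
    (hhom : ∀ l s t : ℝ, 0 ≤ l → 0 ≤ s → 0 ≤ t → φ (l * s) (l * t) = l * φ s t)
    (hnn : ∀ s t : ℝ, 0 ≤ s → 0 ≤ t → 0 ≤ φ s t)
    (hnz : ∃ s t : ℝ, 0 < s ∧ 0 < t ∧ 0 < φ s t)
    (f₀ f₁ : ℝ → ℝ) (hm0 : Measurable f₀) (hm1 : Measurable f₁)
    (h0 : ∀ t, 0 ≤ f₀ t) (h1 : ∀ t, 0 ≤ f₁ t)
    (x : ℝ) (hx : 0 < x)
    (hfin0 : ces (cop (fun t => ENNReal.ofReal (f₀ t))) x < ⊤)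
    (hfin1 : ces (cop (fun t => ENNReal.ofReal (f₁ t))) x < ⊤) :
    ces (cop (fun t => ENNReal.ofReal (φ (f₀ t) (f₁ t)))) x
      ≤ ENNReal.ofReal
          (φ (ces (cop (fun t => ENNReal.ofReal (f₀ t))) x).toReal
             (ces (cop (fun t => ENNReal.ofReal (f₁ t))) x).toReal) := by
  set F₀ : ℝ → ENNReal := fun t => ENNReal.ofReal (f₀ t) with hF₀
  set F₁ : ℝ → ENNReal := fun t => ENNReal.ofReal (f₁ t) with hF₁
  set a : ℝ := (ces (cop F₀) x).toReal with ha
  set b : ℝ := (ces (cop F₁) x).toReal with hb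
  have ha0 : 0 ≤ a := ENNReal.toReal_nonneg
  have hb0 : 0 ≤ b := ENNReal.toReal_nonneg
  refine ENNReal.le_of_forall_pos_le_add fun ε hε _ => ?_
  have hεr : (0:ℝ) < (ε:ℝ) := by exact_mod_cast hε
  obtain ⟨α, β, hα, hβ, hmaj, hval⟩ := line2D φ hconc hcont hhom hnn ha0 hb0 hεr
  set α' : ENNReal := ENNReal.ofReal α with hα'
  set β' : ENNReal := ENNReal.ofReal β with hβ'
  -- pointwise bound
  have hpt : ∀ t : ℝ, ENNReal.ofReal (φ (f₀ t) (f₁ t)) ≤ α' * F₀ t + β' * F₁ t := by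
    intro t
    calc ENNReal.ofReal (φ (f₀ t) (f₁ t))
        ≤ ENNReal.ofReal (α * f₀ t + β * f₁ t) :=
          ENNReal.ofReal_le_ofReal (hmaj _ _ (h0 t) (h1 t))
      _ = ENNReal.ofReal (α * f₀ t) + ENNReal.ofReal (β * f₁ t) :=
          ENNReal.ofReal_add (mul_nonneg hα (h0 t)) (mul_nonneg hβ (h1 t))
      _ = α' * F₀ t + β' * F₁ t := by
          rw [hα', hβ', ENNReal.ofReal_mul hα, ENNReal.ofReal_mul hβ]
  -- measurability facts
  have hmF₀ : Measurable fun s : ℝ => F₀ s / ENNReal.ofReal s :=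
    (hm0.ennreal_ofReal).div (ENNReal.measurable_ofReal.comp measurable_id)
  have hmF₁ : Measurable fun s : ℝ => F₁ s / ENNReal.ofReal s :=
    (hm1.ennreal_ofReal).div (ENNReal.measurable_ofReal.comp measurable_id)
  have hanti0 : Antitone (cop F₀) := fun t t' h => lintegral_mono_set (Ioi_subset_Ioi h)
  have hanti1 : Antitone (cop F₁) := fun t t' h => lintegral_mono_set (Ioi_subset_Ioi h)
  -- Copson level
  have hcop : ∀ t : ℝ, cop (fun s => ENNReal.ofReal (φ (f₀ s) (f₁ s))) t
      ≤ α' * cop F₀ t + β' * cop F₁ t := by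
    intro t
    have step1 : cop (fun s => ENNReal.ofReal (φ (f₀ s) (f₁ s))) t
        ≤ ∫⁻ s in Set.Ioi t, (α' * F₀ s + β' * F₁ s) / ENNReal.ofReal s := by
      refine lintegral_mono fun s => ?_
      exact ENNReal.div_le_div_right (hpt s) _
    have step2 : ∫⁻ s in Set.Ioi t, (α' * F₀ s + β' * F₁ s) / ENNReal.ofReal s
        = α' * cop F₀ t + β' * cop F₁ t := by
      have heq : ∀ s : ℝ, (α' * F₀ s + β' * F₁ s) / ENNReal.ofReal s
          = α' * (F₀ s / ENNReal.ofReal s) + β' * (F₁ s / ENNReal.ofReal s) := by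
        intro s
        rw [ENNReal.add_div, mul_div_assoc, mul_div_assoc]
      simp only [heq]
      rw [lintegral_add_left (hmF₀.const_mul α'), lintegral_const_mul α' hmF₀,
        lintegral_const_mul β' hmF₁]
      rfl
    exact step1.trans (le_of_eq step2)
  -- Cesàro level
  have hces : ces (cop (fun s => ENNReal.ofReal (φ (f₀ s) (f₁ s)))) x
      ≤ α' * ces (cop F₀) x + β' * ces (cop F₁) x := by
    have step1 : ces (cop (fun s => ENNReal.ofReal (φ (f₀ s) (f₁ s)))) x
        ≤ (∫⁻ t in Set.Ioo 0 x, (α' * cop F₀ t + β' * cop F₁ t)) / ENNReal.ofReal x :=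
      ENNReal.div_le_div_right (lintegral_mono fun t => hcop t) _
    have step2 : (∫⁻ t in Set.Ioo 0 x, (α' * cop F₀ t + β' * cop F₁ t)) / ENNReal.ofReal x
        = α' * ces (cop F₀) x + β' * ces (cop F₁) x := by
      rw [lintegral_add_left (hanti0.measurable.const_mul α'),
        lintegral_const_mul α' hanti0.measurable, lintegral_const_mul β' hanti1.measurable,
        ENNReal.add_div, mul_div_assoc, mul_div_assoc]
      rfl
    exact step1.trans (le_of_eq step2)
  -- conclude
  have hA : ces (cop F₀) x = ENNReal.ofReal a := (ENNReal.ofReal_toReal hfin0.ne).symm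
  have hB : ces (cop F₁) x = ENNReal.ofReal b := (ENNReal.ofReal_toReal hfin1.ne).symm
  calc ces (cop (fun s => ENNReal.ofReal (φ (f₀ s) (f₁ s)))) x
      ≤ α' * ces (cop F₀) x + β' * ces (cop F₁) x := hces
    _ = ENNReal.ofReal (α * a) + ENNReal.ofReal (β * b) := by
        rw [hA, hB, hα', hβ', ← ENNReal.ofReal_mul hα, ← ENNReal.ofReal_mul hβ]
    _ = ENNReal.ofReal (α * a + β * b) :=
        (ENNReal.ofReal_add (mul_nonneg hα ha0) (mul_nonneg hβ hb0)).symm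
    _ ≤ ENNReal.ofReal (φ a b + (ε:ℝ)) := ENNReal.ofReal_le_ofReal hval
    _ = ENNReal.ofReal (φ a b) + ENNReal.ofReal (ε:ℝ) :=
        ENNReal.ofReal_add (hnn a b ha0 hb0) hεr.le
    _ = ENNReal.ofReal (φ a b) + ε := by rw [ENNReal.ofReal_coe_nnreal]
end

section
/- Let 1 < p₀, p₁ < ∞, 0 < θ < 1, and define p by 1/p = (1−θ)/p₀ + θ/p₁. For a measurable function f : (0,∞) → ℝ the following are equivalent: (i) the nonincreasing majorant f̃ belongs to L^p(0,∞); (ii) there exist measurable f₀, f₁ : (0,∞) → [0,∞) with f̃₀ ∈ L^{p₀}(0,∞), f̃₁ ∈ L^{p₁}(0,∞), and |f(x)| ≤ f₀(x)^{1−θ} f₁(x)^{θ} for almost every x. (That is, the Calderón product of Tandori spaces satisfies (L̃^{p₀})^{1−θ}(L̃^{p₁})^{θ} = L̃^{p}.) -/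
open MeasureTheory Set

/-- The nonincreasing majorant `f̃(x) = esssup_{t ≥ x} |f(t)|`, with values in `[0,∞]`. -/
noncomputable def maj (f : ℝ → ℝ) (x : ℝ) : ENNReal :=
  essSup (fun t => ENNReal.ofReal |f t|) (MeasureTheory.volume.restrict (Set.Ici x))

/-- Membership in the Tandori space `L̃^p(0,∞)`: `f̃ ∈ L^p(0,∞)`. -/
def memTand (p : ℝ) (f : ℝ → ℝ) : Prop :=
  (∫⁻ x in Set.Ioi (0:ℝ), maj f x ^ p) < ⊤

/-- essSup commutes with `rpow` by a positive exponent. -/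
theorem essSup_rpow {α : Type*} [MeasurableSpace α] (μ : Measure α) (g : α → ENNReal)
    {r : ℝ} (hr : 0 < r) :
    essSup (fun t => g t ^ r) μ = essSup g μ ^ r := by
  have := (ENNReal.orderIsoRpow r hr).essSup_apply g μ
  simpa [ENNReal.orderIsoRpow] using this.symm

theorem maj_antitone (f : ℝ → ℝ) : Antitone (maj f) := by
  intro x y hxy
  exact essSup_mono_measure (Measure.absolutelyContinuous_of_le
    (Measure.restrict_mono (Set.Ici_subset_Ici.mpr hxy) le_rfl))

theorem maj_rpow (f : ℝ → ℝ) {r : ℝ} (hr : 0 < r) (x : ℝ) :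
    maj (fun t => |f t| ^ r) x = maj f x ^ r := by
  unfold maj
  rw [← essSup_rpow _ _ hr]
  congr 1
  funext t
  rw [abs_of_nonneg (Real.rpow_nonneg (abs_nonneg _) _),
    ENNReal.ofReal_rpow_of_nonneg (abs_nonneg _) hr.le]

/-- `(L̃^{p₀})^{1−θ}(L̃^{p₁})^{θ} = L̃^p` on `(0,∞)` for `1 < p₀, p₁ < ∞`, `0 < θ < 1`
and `1/p = (1−θ)/p₀ + θ/p₁`: `f̃ ∈ L^p` iff `|f| ≤ f₀^{1−θ} f₁^{θ}` a.e. on `(0,∞)`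
for some nonnegative measurable `f₀, f₁` with `f̃₀ ∈ L^{p₀}`, `f̃₁ ∈ L^{p₁}`. -/
theorem stmt11 (p₀ p₁ θ p : ℝ) (hp₀ : 1 < p₀) (hp₁ : 1 < p₁)
    (hθ0 : 0 < θ) (hθ1 : θ < 1) (hp : 1 / p = (1 - θ) / p₀ + θ / p₁)
    (f : ℝ → ℝ) (hf : Measurable f) :
    memTand p f ↔
      ∃ f₀ f₁ : ℝ → ℝ, Measurable f₀ ∧ Measurable f₁ ∧
        (∀ t, 0 ≤ f₀ t) ∧ (∀ t, 0 ≤ f₁ t) ∧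
        memTand p₀ f₀ ∧ memTand p₁ f₁ ∧
        (∀ᵐ x ∂(MeasureTheory.volume.restrict (Set.Ioi (0:ℝ))),
          |f x| ≤ f₀ x ^ (1 - θ) * f₁ x ^ θ) := by
  have hθ1' : 0 < 1 - θ := by linarith
  have hP₀ : 0 < p₀ := by linarith
  have hP₁ : 0 < p₁ := by linarith
  have hinv : 0 < (1 - θ) / p₀ + θ / p₁ :=
    add_pos (div_pos hθ1' hP₀) (div_pos hθ0 hP₁)
  have hPpos : 0 < p := by
    have := hp ▸ hinv
    exact one_div_pos.mp this
  have hsum : (1 - θ) * p / p₀ + θ * p / p₁ = 1 := by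
    have h1 : p * ((1 - θ) / p₀) + p * (θ / p₁) = 1 := by
      rw [← mul_add, ← hp, mul_one_div, div_self hPpos.ne']
    linear_combination h1
  constructor
  · intro hmem
    refine ⟨fun t => |f t| ^ (p / p₀), fun t => |f t| ^ (p / p₁),
      (hf.abs.pow_const _), (hf.abs.pow_const _),
      fun t => Real.rpow_nonneg (abs_nonneg _) _,
      fun t => Real.rpow_nonneg (abs_nonneg _) _, ?_, ?_, ?_⟩
    · unfold memTand
      have : ∀ x, maj (fun t => |f t| ^ (p / p₀)) x ^ p₀ = maj f x ^ p := by
        intro x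
        rw [maj_rpow f (div_pos hPpos hP₀), ← ENNReal.rpow_mul,
          div_mul_cancel₀ _ hP₀.ne']
      simpa only [this, memTand] using hmem
    · unfold memTand
      have : ∀ x, maj (fun t => |f t| ^ (p / p₁)) x ^ p₁ = maj f x ^ p := by
        intro x
        rw [maj_rpow f (div_pos hPpos hP₁), ← ENNReal.rpow_mul,
          div_mul_cancel₀ _ hP₁.ne']
      simpa only [this, memTand] using hmem
    · refine Filter.Eventually.of_forall fun x => ?_
      rw [← Real.rpow_mul (abs_nonneg _), ← Real.rpow_mul (abs_nonneg _),
        ← Real.rpow_add' (abs_nonneg _) (by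
          rw [show p / p₀ * (1 - θ) + p / p₁ * θ = (1 - θ) * p / p₀ + θ * p / p₁ by ring, hsum]
          norm_num)]
      rw [show p / p₀ * (1 - θ) + p / p₁ * θ = (1 - θ) * p / p₀ + θ * p / p₁ by ring, hsum,
        Real.rpow_one]
  · rintro ⟨f₀, f₁, hm₀, hm₁, h0₀, h0₁, ht₀, ht₁, hae⟩
    -- pointwise bound on the majorant
    have key : ∀ x ∈ Set.Ioi (0:ℝ), maj f x ≤ maj f₀ x ^ (1 - θ) * maj f₁ x ^ θ := by
      intro x hx
      have hac : (MeasureTheory.volume.restrict (Set.Ici x)) ≪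
          (MeasureTheory.volume.restrict (Set.Ioi (0:ℝ))) :=
        Measure.absolutelyContinuous_of_le
          (Measure.restrict_mono (show Set.Ici x ⊆ Set.Ioi (0:ℝ) from fun t (ht : x ≤ t) => (lt_of_lt_of_le hx ht : (0:ℝ) < t)) le_rfl)
      have hae' : ∀ᵐ t ∂(MeasureTheory.volume.restrict (Set.Ici x)),
          |f t| ≤ f₀ t ^ (1 - θ) * f₁ t ^ θ := hac.ae_le hae
      refine essSup_le_of_ae_le _ ?_
      have hb₀ := ENNReal.ae_le_essSup (μ := MeasureTheory.volume.restrict (Set.Ici x))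
        (fun t => ENNReal.ofReal |f₀ t|)
      have hb₁ := ENNReal.ae_le_essSup (μ := MeasureTheory.volume.restrict (Set.Ici x))
        (fun t => ENNReal.ofReal |f₁ t|)
      filter_upwards [hae', hb₀, hb₁] with t h h0 h1
      calc ENNReal.ofReal |f t| ≤ ENNReal.ofReal (f₀ t ^ (1 - θ) * f₁ t ^ θ) :=
            ENNReal.ofReal_le_ofReal h
        _ = ENNReal.ofReal (f₀ t) ^ (1 - θ) * ENNReal.ofReal (f₁ t) ^ θ := by
            rw [ENNReal.ofReal_mul (Real.rpow_nonneg (h0₀ t) _),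
              ENNReal.ofReal_rpow_of_nonneg (h0₀ t) hθ1'.le,
              ENNReal.ofReal_rpow_of_nonneg (h0₁ t) hθ0.le]
        _ ≤ maj f₀ x ^ (1 - θ) * maj f₁ x ^ θ := by
            have e0 : ENNReal.ofReal (f₀ t) = ENNReal.ofReal |f₀ t| := by
              rw [abs_of_nonneg (h0₀ t)]
            have e1 : ENNReal.ofReal (f₁ t) = ENNReal.ofReal |f₁ t| := by
              rw [abs_of_nonneg (h0₁ t)]
            exact mul_le_mul' (ENNReal.rpow_le_rpow (e0 ▸ h0) hθ1'.le)
              (ENNReal.rpow_le_rpow (e1 ▸ h1) hθ0.le)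
    -- Hölder setup
    set r : ℝ := p₀ / ((1 - θ) * p) with hr
    set s : ℝ := p₁ / (θ * p) with hs
    have h1p : 0 < (1 - θ) * p := mul_pos hθ1' hPpos
    have hθp : 0 < θ * p := mul_pos hθ0 hPpos
    have hlt₀ : (1 - θ) * p < p₀ := by
      have : θ * p / p₁ > 0 := div_pos hθp hP₁
      have h2 : (1 - θ) * p / p₀ < 1 := by linarith
      exact (div_lt_one hP₀).mp h2
    have hconj : r.HolderConjugate s := by
      refine ⟨?_, div_pos hP₀ h1p, div_pos hP₁ hθp⟩
      · rw [inv_one, hr, hs, inv_div, inv_div]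
        exact hsum
    have hmeas₀ : AEMeasurable (fun x => maj f₀ x ^ ((1 - θ) * p))
        (MeasureTheory.volume.restrict (Set.Ioi (0:ℝ))) :=
      ((maj_antitone f₀).measurable.pow_const _).aemeasurable
    have hmeas₁ : AEMeasurable (fun x => maj f₁ x ^ (θ * p))
        (MeasureTheory.volume.restrict (Set.Ioi (0:ℝ))) :=
      ((maj_antitone f₁).measurable.pow_const _).aemeasurable
    have holder := ENNReal.lintegral_mul_le_Lp_mul_Lq
      (MeasureTheory.volume.restrict (Set.Ioi (0:ℝ))) hconj hmeas₀ hmeas₁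
    have step1 : (∫⁻ x in Set.Ioi (0:ℝ), maj f x ^ p) ≤
        ∫⁻ x in Set.Ioi (0:ℝ), maj f₀ x ^ ((1 - θ) * p) * maj f₁ x ^ (θ * p) := by
      refine lintegral_mono_ae ?_
      filter_upwards [ae_restrict_mem measurableSet_Ioi] with x hx
      calc maj f x ^ p ≤ (maj f₀ x ^ (1 - θ) * maj f₁ x ^ θ) ^ p :=
            ENNReal.rpow_le_rpow (key x hx) hPpos.le
        _ = maj f₀ x ^ ((1 - θ) * p) * maj f₁ x ^ (θ * p) := by
            rw [ENNReal.mul_rpow_of_nonneg _ _ hPpos.le, ← ENNReal.rpow_mul,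
              ← ENNReal.rpow_mul]
    have e₀ : ∀ x : ℝ, (maj f₀ x ^ ((1 - θ) * p)) ^ r = maj f₀ x ^ p₀ := by
      intro x
      rw [← ENNReal.rpow_mul, hr, mul_div_cancel₀ _ h1p.ne']
    have e₁ : ∀ x : ℝ, (maj f₁ x ^ (θ * p)) ^ s = maj f₁ x ^ p₁ := by
      intro x
      rw [← ENNReal.rpow_mul, hs, mul_div_cancel₀ _ hθp.ne']
    rw [funext e₀] at holder
    simp only [e₀, e₁] at holder
    unfold memTand at ht₀ ht₁ ⊢
    refine lt_of_le_of_lt (le_trans step1 holder) ?_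
    exact ENNReal.mul_lt_top
      (ENNReal.rpow_lt_top_of_nonneg (by positivity) ht₀.ne)
      (ENNReal.rpow_lt_top_of_nonneg (by positivity) ht₁.ne)
end

section
/- Let 1 < p < ∞ and let f : (0,∞) → ℝ be measurable with K(t, f) := ∫_0^∞ min(1, t/s)|f(s)| ds finite for all t > 0. Then ‖C|f|‖_{L^p(0,∞)} ≤ ( ∫_0^∞ (K(t,f)/t)^p dt )^{1/p} ≤ p · ‖C|f|‖_{L^p(0,∞)}. Consequently, f belongs to the real interpolation space (L^1, L^1(1/s))_{1−1/p, p} if and only if C|f| ∈ L^p(0,∞), i.e., (L^1, L^1(1/s))_{1−1/p, p} = Ces_p[0,∞) with equivalent norms. -/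
open MeasureTheory Set

/-- The K-functional for the couple `(L^1, L^1(1/s))`:
`K(t,f) = ∫_0^∞ min(1, t/s)|f(s)| ds`, with values in `[0,∞]`. -/
noncomputable def Kf (f : ℝ → ℝ) (t : ℝ) : ENNReal :=
  ∫⁻ s in Set.Ioi (0:ℝ), ENNReal.ofReal (min 1 (t / s) * |f s|)

/-- The `L^p(0,∞)`-quasinorm of the Cesàro transform `C|f|(t) = (1/t)∫_0^t |f(s)| ds`. -/
noncomputable def cesNorm (f : ℝ → ℝ) (p : ℝ) : ENNReal :=
  (∫⁻ t in Set.Ioi (0:ℝ),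
      ((∫⁻ s in Set.Ioo (0:ℝ) t, ENNReal.ofReal |f s|) / ENNReal.ofReal t) ^ p) ^ (1 / p)

lemma lint_Ioi_rpow {a : ℝ} (ha : 0 < a) {r : ℝ} (hr : r < -1) :
    ∫⁻ u in Set.Ioi a, ENNReal.ofReal (u ^ r) = ENNReal.ofReal (-a ^ (r + 1) / (r + 1)) := by
  rw [← MeasureTheory.ofReal_integral_eq_lintegral_ofReal
      (integrableOn_Ioi_rpow_of_lt hr ha)
      ((ae_restrict_mem measurableSet_Ioi).mono fun u hu =>
        Real.rpow_nonneg ((ha.trans hu).le) r),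
    integral_Ioi_rpow_of_lt hr ha]

lemma lint_Ioo_rpow {u : ℝ} (hu : 0 < u) {r : ℝ} (hr : -1 < r) :
    ∫⁻ t in Set.Ioo 0 u, ENNReal.ofReal (t ^ r) = ENNReal.ofReal (u ^ (r + 1) / (r + 1)) := by
  have hint : IntegrableOn (fun t : ℝ => t ^ r) (Set.Ioo 0 u) :=
    (intervalIntegral.integrableOn_Ioo_rpow_iff hu).2 hr
  rw [← MeasureTheory.ofReal_integral_eq_lintegral_ofReal hint
      ((ae_restrict_mem measurableSet_Ioo).mono fun t ht =>
        Real.rpow_nonneg ht.1.le r)]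
  congr 1
  rw [← MeasureTheory.integral_Ioc_eq_integral_Ioo, ← intervalIntegral.integral_of_le hu.le,
    integral_rpow (Or.inl hr), Real.zero_rpow (by linarith), sub_zero]

noncomputable def FF (f : ℝ → ℝ) (u : ℝ) : ENNReal :=
  ∫⁻ s in Set.Ioo (0:ℝ) u, ENNReal.ofReal |f s|

lemma FF_mono (f : ℝ → ℝ) : Monotone (FF f) := fun u v huv =>
  lintegral_mono_set (Set.Ioo_subset_Ioo le_rfl huv)

lemma FF_meas (f : ℝ → ℝ) : Measurable (FF f) := (FF_mono f).measurable

-- kernel lemma : ofReal (min 1 (t/s)) = ofReal t * ∫⁻ u in Ioi (max s t), ofReal (u ^ (-2:ℝ))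
lemma kernel_eq {s t : ℝ} (hs : 0 < s) (ht : 0 < t) :
    ENNReal.ofReal (min 1 (t / s)) =
      ENNReal.ofReal t * ∫⁻ u in Set.Ioi (max s t), ENNReal.ofReal (u ^ (-2:ℝ)) := by
  have hmax : 0 < max s t := lt_max_of_lt_right ht
  rw [lint_Ioi_rpow hmax (by norm_num)]
  have : -max s t ^ ((-2:ℝ) + 1) / ((-2:ℝ) + 1) = (max s t)⁻¹ := by
    norm_num
    rw [Real.rpow_neg_one]
  rw [this, ← ENNReal.ofReal_mul ht.le]
  congr 1
  rcases le_total s t with h | h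
  · rw [max_eq_right h, min_eq_left (by rw [le_div_iff₀ hs]; linarith), mul_inv_cancel₀ ht.ne']
  · rw [max_eq_left h, min_eq_right (by rw [div_le_one hs]; linarith), div_eq_mul_inv]

noncomputable def HH (f : ℝ → ℝ) (t : ℝ) : ENNReal :=
  ∫⁻ u in Set.Ioi t, FF f u * ENNReal.ofReal (u ^ (-2:ℝ))

lemma K_eq (f : ℝ → ℝ) (hf : Measurable f) {t : ℝ} (ht : 0 < t) :
    Kf f t = ENNReal.ofReal t * HH f t := by
  set g : ℝ → ENNReal := fun s => ENNReal.ofReal |f s| with hg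
  have hgm : Measurable g := ENNReal.measurable_ofReal.comp hf.abs
  set k : ℝ → ENNReal := fun u => ENNReal.ofReal (u ^ (-2:ℝ)) with hk
  have hkm : Measurable k := by fun_prop
  have step1 : Kf f t = ∫⁻ s in Set.Ioi (0:ℝ),
      ENNReal.ofReal t * ∫⁻ u in Set.Ioi t, g s * (Set.Ioi s).indicator k u := by
    refine setLIntegral_congr_fun measurableSet_Ioi (fun s hs => ?_)
    have hs' : (0:ℝ) < s := hs
    have hmin : 0 ≤ min 1 (t / s) := le_min zero_le_one (div_nonneg ht.le hs'.le)
    rw [ENNReal.ofReal_mul hmin, kernel_eq hs' ht]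
    have hIoi : Set.Ioi (max s t) = Set.Ioi s ∩ Set.Ioi t := by
      rw [Set.Ioi_inter_Ioi]
    rw [hIoi, ← Measure.restrict_restrict measurableSet_Ioi,
      ← lintegral_indicator measurableSet_Ioi]
    rw [mul_assoc]
    congr 1
    rw [mul_comm]
    exact (lintegral_const_mul' (g s) _ ENNReal.ofReal_ne_top).symm
  rw [step1, lintegral_const_mul' _ _ ENNReal.ofReal_ne_top]
  congr 1
  have swap := lintegral_lintegral_swap (μ := volume.restrict (Set.Ioi (0:ℝ)))
    (ν := volume.restrict (Set.Ioi t))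
    (f := fun s u => g s * (Set.Ioi s).indicator k u) ?meas
  case meas =>
    have : Function.uncurry (fun s u => g s * (Set.Ioi s).indicator k u) =
        fun p : ℝ × ℝ => g p.1 * ({q : ℝ × ℝ | q.1 < q.2}.indicator (fun q => k q.2) p) := by
      funext p
      by_cases h : p.1 < p.2 <;>
        simp [Function.uncurry, Set.indicator, h, Set.mem_Ioi, Set.mem_setOf_eq]
    rw [this]
    exact ((hgm.comp measurable_fst).mul
      (((hkm.comp measurable_snd)).indicator
        (measurableSet_lt measurable_fst measurable_snd))).aemeasurable
  rw [swap]
  refine setLIntegral_congr_fun measurableSet_Ioi (fun u hu => ?_)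
  have h1 : (fun s => g s * (Set.Ioi s).indicator k u) =
      fun s => (Set.Iio u).indicator (fun s => g s * k u) s := by
    funext s
    by_cases h : s < u <;> simp [Set.indicator, h, Set.mem_Ioi, Set.mem_Iio]
  rw [h1, lintegral_indicator measurableSet_Iio, Measure.restrict_restrict measurableSet_Iio,
    Set.Iio_inter_Ioi, FF, ← lintegral_mul_const' _ _ ENNReal.ofReal_ne_top]

lemma ofReal_rpow_mul {x : ℝ} (hx : 0 < x) (r r' : ℝ) :
    ENNReal.ofReal (x ^ r) * ENNReal.ofReal (x ^ r') = ENNReal.ofReal (x ^ (r + r')) := by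
  rw [← ENNReal.ofReal_mul (Real.rpow_nonneg hx.le r), ← Real.rpow_add hx]

lemma ofReal_rpow_rpow {x : ℝ} (hx : 0 < x) (r e : ℝ) :
    (ENNReal.ofReal (x ^ r)) ^ e = ENNReal.ofReal (x ^ (r * e)) := by
  rw [ENNReal.ofReal_rpow_of_pos (Real.rpow_pos_of_pos hx r), ← Real.rpow_mul hx.le]

lemma inv_ofReal {x : ℝ} (hx : 0 < x) :
    (ENNReal.ofReal x)⁻¹ = ENNReal.ofReal (x ^ (-1 : ℝ)) := by
  rw [Real.rpow_neg_one, ENNReal.ofReal_inv_of_pos hx]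

lemma stepA (f : ℝ → ℝ) {p q : ℝ} (hpq : Real.HolderConjugate p q)
    {t : ℝ} (ht : 0 < t) :
    (HH f t) ^ p ≤ (ENNReal.ofReal p) ^ (p - 1) * (ENNReal.ofReal (t ^ (-q⁻¹)) *
      ∫⁻ u in Set.Ioi t, (FF f u / ENNReal.ofReal u) ^ p * ENNReal.ofReal (u ^ (-p⁻¹))) := by
  have hp0 : (0:ℝ) < p := hpq.pos
  have hq0 : (0:ℝ) < q := hpq.symm.pos
  have ha0 : (0:ℝ) < p⁻¹ := by positivity
  have hb0 : (0:ℝ) < q⁻¹ := by positivity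
  have hab : p⁻¹ + q⁻¹ = 1 := hpq.inv_add_inv_eq_one
  set a := p⁻¹ with hadef
  set b := q⁻¹ with hbdef
  set φ : ℝ → ENNReal := fun u =>
    (FF f u / ENNReal.ofReal u) * ENNReal.ofReal (u ^ (a*b - a)) * ENNReal.ofReal (t ^ (-(a*b)))
    with hφ
  set ψ : ℝ → ENNReal := fun u =>
    ENNReal.ofReal (u ^ (-b - a*b)) * ENNReal.ofReal (t ^ (a*b)) with hψ
  have hFm : Measurable (FF f) := FF_meas f
  have hφm : Measurable φ := by fun_prop
  have hψm : Measurable ψ := by fun_prop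
  have hHH : HH f t = ∫⁻ u in Set.Ioi t, (φ * ψ) u := by
    refine setLIntegral_congr_fun measurableSet_Ioi (fun u hu => ?_)
    have hu' : (0:ℝ) < u := ht.trans hu
    show FF f u * ENNReal.ofReal (u ^ (-2:ℝ)) = φ u * ψ u
    symm
    calc φ u * ψ u
        = (FF f u / ENNReal.ofReal u) *
          (ENNReal.ofReal (u ^ (a*b - a)) * ENNReal.ofReal (u ^ (-b - a*b)) *
           (ENNReal.ofReal (t ^ (-(a*b))) * ENNReal.ofReal (t ^ (a*b)))) := by
          simp only [hφ, hψ]; ring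
      _ = (FF f u / ENNReal.ofReal u) * ENNReal.ofReal (u ^ (-1:ℝ)) := by
          rw [ofReal_rpow_mul hu', ofReal_rpow_mul ht,
            show a*b - a + (-b - a*b) = (-1:ℝ) by linarith,
            show -(a*b) + a*b = (0:ℝ) by ring, Real.rpow_zero, ENNReal.ofReal_one, mul_one]
      _ = FF f u * ENNReal.ofReal (u ^ (-2:ℝ)) := by
          rw [div_eq_mul_inv, inv_ofReal hu', mul_assoc, ofReal_rpow_mul hu']
          norm_num
  have holder := ENNReal.lintegral_mul_le_Lp_mul_Lq (volume.restrict (Set.Ioi t)) hpq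
    hφm.aemeasurable hψm.aemeasurable
  rw [← hHH] at holder
  -- compute ∫ ψ^q = ofReal p
  have hψq : ∫⁻ u in Set.Ioi t, ψ u ^ q = ENNReal.ofReal p := by
    have hpt : ∀ᵐ u ∂(volume : Measure ℝ), u ∈ Set.Ioi t → ψ u ^ q =
        ENNReal.ofReal (t ^ a) * ENNReal.ofReal (u ^ (-1 - a)) := by
      refine ae_of_all _ fun u hu => ?_
      have hu' : (0:ℝ) < u := ht.trans hu
      simp only [hψ]
      rw [ENNReal.mul_rpow_of_nonneg _ _ hq0.le, ofReal_rpow_rpow hu', ofReal_rpow_rpow ht,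
        mul_comm, show a*b*q = a by rw [hadef, hbdef]; field_simp; try ring_nf,
        show (-b - a*b) * q = -1 - a by rw [hadef, hbdef]; field_simp; try ring]
    rw [setLIntegral_congr_fun_ae measurableSet_Ioi hpt,
      lintegral_const_mul' _ _ ENNReal.ofReal_ne_top, lint_Ioi_rpow ht (by linarith),
      show (-1 - a) + 1 = -a by ring, ← ENNReal.ofReal_mul (Real.rpow_nonneg ht.le _)]
    congr 1
    have h1 : t ^ a * t ^ (-a) = 1 := by
      rw [← Real.rpow_add ht]; simp
    have h2 : p * a = 1 := by rw [hadef]; field_simp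
    field_simp
    nlinarith [h1, h2]
  -- compute ∫ φ^p
  have hφp : ∫⁻ u in Set.Ioi t, φ u ^ p = ENNReal.ofReal (t ^ (-b)) *
      ∫⁻ u in Set.Ioi t, (FF f u / ENNReal.ofReal u) ^ p * ENNReal.ofReal (u ^ (-a)) := by
    have hpt : ∀ᵐ u ∂(volume : Measure ℝ), u ∈ Set.Ioi t → φ u ^ p =
        (FF f u / ENNReal.ofReal u) ^ p * ENNReal.ofReal (u ^ (-a)) *
          ENNReal.ofReal (t ^ (-b)) := by
      refine ae_of_all _ fun u hu => ?_
      have hu' : (0:ℝ) < u := ht.trans hu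
      simp only [hφ]
      rw [ENNReal.mul_rpow_of_nonneg _ _ hp0.le, ENNReal.mul_rpow_of_nonneg _ _ hp0.le,
        ofReal_rpow_rpow hu', ofReal_rpow_rpow ht,
        show (a*b - a) * p = -a by
          have hap : a * p = 1 := by rw [hadef]; field_simp
          linear_combination (b - 1) * hap + hab,
        show -(a*b) * p = -b by
          have hap : a * p = 1 := by rw [hadef]; field_simp
          linear_combination (-b) * hap]
    rw [setLIntegral_congr_fun_ae measurableSet_Ioi hpt,
      lintegral_mul_const' _ _ ENNReal.ofReal_ne_top, mul_comm]
  -- conclude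
  have key := ENNReal.rpow_le_rpow holder hp0.le
  rw [ENNReal.mul_rpow_of_nonneg _ _ hp0.le, ← ENNReal.rpow_mul, ← ENNReal.rpow_mul,
    show 1/p*p = (1:ℝ) by field_simp, show 1/q*p = p - 1 by
      rw [← hpq.div_conj_eq_sub_one]; ring,
    ENNReal.rpow_one, hψq, hφp] at key
  calc HH f t ^ p ≤ ENNReal.ofReal (t ^ (-b)) *
        (∫⁻ u in Set.Ioi t, (FF f u / ENNReal.ofReal u) ^ p * ENNReal.ofReal (u ^ (-a))) *
        ENNReal.ofReal p ^ (p - 1) := key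
    _ = _ := by ring

lemma hardy (f : ℝ → ℝ) {p : ℝ} (hp : 1 < p) :
    ∫⁻ t in Set.Ioi (0:ℝ), (HH f t) ^ p ≤
      (ENNReal.ofReal p) ^ p *
        ∫⁻ t in Set.Ioi (0:ℝ), (FF f t / ENNReal.ofReal t) ^ p := by
  have hpq : Real.HolderConjugate p (Real.conjExponent p) :=
    Real.HolderConjugate.conjExponent hp
  set q := Real.conjExponent p with hqdef
  have hp0 : (0:ℝ) < p := hpq.pos
  have hq0 : (0:ℝ) < q := hpq.symm.pos
  have ha0 : (0:ℝ) < p⁻¹ := by positivity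
  have hb0 : (0:ℝ) < q⁻¹ := by positivity
  have hab : p⁻¹ + q⁻¹ = 1 := hpq.inv_add_inv_eq_one
  set a := p⁻¹ with hadef
  set b := q⁻¹ with hbdef
  set G : ℝ → ENNReal := fun u =>
    (FF f u / ENNReal.ofReal u) ^ p * ENNReal.ofReal (u ^ (-a)) with hG
  have hFm : Measurable (FF f) := FF_meas f
  have hGm : Measurable G := by fun_prop
  have hC : (ENNReal.ofReal p) ^ (p - 1 : ℝ) ≠ ⊤ :=
    ENNReal.rpow_ne_top_of_nonneg (by linarith) ENNReal.ofReal_ne_top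
  have step1 : ∫⁻ t in Set.Ioi (0:ℝ), (HH f t) ^ p ≤
      (ENNReal.ofReal p) ^ (p - 1 : ℝ) *
        ∫⁻ t in Set.Ioi (0:ℝ), ENNReal.ofReal (t ^ (-b)) * ∫⁻ u in Set.Ioi t, G u := by
    rw [← lintegral_const_mul' _ _ hC]
    refine lintegral_mono_ae ((ae_restrict_mem measurableSet_Ioi).mono fun t ht => ?_)
    simpa [mul_assoc] using stepA f hpq ht
  refine step1.trans ?_
  have hsplit : ((ENNReal.ofReal p) ^ p : ENNReal) = (ENNReal.ofReal p) ^ (p - 1 : ℝ) *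
      ENNReal.ofReal p := by
    calc (ENNReal.ofReal p) ^ (p : ℝ) = (ENNReal.ofReal p) ^ (p - 1 + 1 : ℝ) := by
          congr 1; ring
      _ = (ENNReal.ofReal p) ^ (p - 1 : ℝ) * (ENNReal.ofReal p) ^ (1 : ℝ) :=
          ENNReal.rpow_add _ _ (ENNReal.ofReal_pos.mpr hp0).ne' ENNReal.ofReal_ne_top
      _ = (ENNReal.ofReal p) ^ (p - 1 : ℝ) * ENNReal.ofReal p := by rw [ENNReal.rpow_one]
  rw [hsplit, mul_assoc]
  refine mul_le_mul_right (le_of_eq ?_) _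
  -- Fubini computation
  have inner_eq : ∀ t ∈ Set.Ioi (0:ℝ),
      ENNReal.ofReal (t ^ (-b)) * ∫⁻ u in Set.Ioi t, G u =
      ∫⁻ u in Set.Ioi (0:ℝ), ENNReal.ofReal (t ^ (-b)) * (Set.Ioi t).indicator G u := by
    intro t ht
    rw [lintegral_const_mul' _ _ ENNReal.ofReal_ne_top]
    congr 1
    rw [lintegral_indicator measurableSet_Ioi, Measure.restrict_restrict measurableSet_Ioi,
      Set.inter_eq_left.mpr (Set.Ioi_subset_Ioi (le_of_lt ht))]
  rw [setLIntegral_congr_fun measurableSet_Ioi inner_eq]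
  have swap := lintegral_lintegral_swap (μ := volume.restrict (Set.Ioi (0:ℝ)))
    (ν := volume.restrict (Set.Ioi (0:ℝ)))
    (f := fun t u => ENNReal.ofReal (t ^ (-b)) * (Set.Ioi t).indicator G u) ?meas
  case meas =>
    have : Function.uncurry (fun t u => ENNReal.ofReal (t ^ (-b)) * (Set.Ioi t).indicator G u) =
        fun pr : ℝ × ℝ => ENNReal.ofReal (pr.1 ^ (-b)) *
          ({q : ℝ × ℝ | q.1 < q.2}.indicator (fun q => G q.2) pr) := by
      funext pr
      by_cases h : pr.1 < pr.2 <;>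
        simp [Function.uncurry, Set.indicator, h, Set.mem_Ioi, Set.mem_setOf_eq]
    rw [this]
    have hm1 : Measurable fun t : ℝ => ENNReal.ofReal (t ^ (-b)) := by fun_prop
    exact ((hm1.comp measurable_fst).mul
      ((hGm.comp measurable_snd).indicator
        (measurableSet_lt measurable_fst measurable_snd))).aemeasurable
  rw [swap]
  -- inner t-integral
  have inner2 : ∀ u ∈ Set.Ioi (0:ℝ),
      ∫⁻ t in Set.Ioi (0:ℝ), ENNReal.ofReal (t ^ (-b)) * (Set.Ioi t).indicator G u =
        ENNReal.ofReal p * ((FF f u / ENNReal.ofReal u) ^ p) := by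
    intro u hu
    have hu' : (0:ℝ) < u := hu
    have h1 : (fun t => ENNReal.ofReal (t ^ (-b)) * (Set.Ioi t).indicator G u) =
        fun t => (Set.Iio u).indicator (fun t => ENNReal.ofReal (t ^ (-b)) * G u) t := by
      funext t
      by_cases h : t < u <;> simp [Set.indicator, h, Set.mem_Ioi, Set.mem_Iio]
    rw [h1, lintegral_indicator measurableSet_Iio, Measure.restrict_restrict measurableSet_Iio,
      Set.Iio_inter_Ioi, lintegral_mul_const _ (by fun_prop), lint_Ioo_rpow hu' (by linarith),
      show (-b) + 1 = a by linarith]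
    have h2 : u ^ a / a = p * u ^ a := by
      rw [hadef]; field_simp
    rw [h2, ENNReal.ofReal_mul hp0.le, hG]
    simp only []
    calc ENNReal.ofReal p * ENNReal.ofReal (u ^ a) *
          ((FF f u / ENNReal.ofReal u) ^ p * ENNReal.ofReal (u ^ (-a)))
        = ENNReal.ofReal p * (FF f u / ENNReal.ofReal u) ^ p *
            (ENNReal.ofReal (u ^ a) * ENNReal.ofReal (u ^ (-a))) := by ring
      _ = ENNReal.ofReal p * (FF f u / ENNReal.ofReal u) ^ p := by
          rw [ofReal_rpow_mul hu', show a + -a = (0:ℝ) by ring, Real.rpow_zero,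
            ENNReal.ofReal_one, mul_one]
  rw [setLIntegral_congr_fun measurableSet_Ioi inner2,
    lintegral_const_mul' _ _ ENNReal.ofReal_ne_top]

lemma FF_le_K (f : ℝ → ℝ) {t : ℝ} (ht : 0 < t) : FF f t ≤ Kf f t := by
  have h1 : FF f t = ∫⁻ s in Set.Ioo (0:ℝ) t, ENNReal.ofReal (min 1 (t / s) * |f s|) := by
    refine setLIntegral_congr_fun measurableSet_Ioo (fun s hs => ?_)
    rw [min_eq_left, one_mul]
    rw [le_div_iff₀ hs.1]
    linarith [hs.2]
  rw [h1, Kf]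
  exact lintegral_mono_set fun s hs => hs.1

/-- For `1 < p < ∞` and measurable `f` with `K(t,f) < ∞` for all `t > 0`:
`‖C|f|‖_{L^p} ≤ (∫_0^∞ (K(t,f)/t)^p dt)^{1/p} ≤ p·‖C|f|‖_{L^p}`; consequently
`f ∈ (L^1, L^1(1/s))_{1−1/p, p}` iff `C|f| ∈ L^p(0,∞)`, i.e.
`(L^1, L^1(1/s))_{1−1/p,p} = Ces_p[0,∞)` with equivalent norms. -/
theorem stmt13 (p : ℝ) (hp : 1 < p) (f : ℝ → ℝ) (hf : Measurable f)
    (hK : ∀ t : ℝ, 0 < t → Kf f t < ⊤) :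
    cesNorm f p ≤ (∫⁻ t in Set.Ioi (0:ℝ), (Kf f t / ENNReal.ofReal t) ^ p) ^ (1 / p) ∧
    (∫⁻ t in Set.Ioi (0:ℝ), (Kf f t / ENNReal.ofReal t) ^ p) ^ (1 / p)
      ≤ ENNReal.ofReal p * cesNorm f p ∧
    ((∫⁻ t in Set.Ioi (0:ℝ), (Kf f t / ENNReal.ofReal t) ^ p) < ⊤ ↔
      (∫⁻ t in Set.Ioi (0:ℝ),
        ((∫⁻ s in Set.Ioo (0:ℝ) t, ENNReal.ofReal |f s|) / ENNReal.ofReal t) ^ p) < ⊤) := by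
  have hp0 : (0:ℝ) < p := by linarith
  have hFdef : ∀ t : ℝ, (∫⁻ s in Set.Ioo (0:ℝ) t, ENNReal.ofReal |f s|) = FF f t :=
    fun t => rfl
  set A := ∫⁻ t in Set.Ioi (0:ℝ), (Kf f t / ENNReal.ofReal t) ^ p with hA
  have hces : cesNorm f p =
      (∫⁻ t in Set.Ioi (0:ℝ), (FF f t / ENNReal.ofReal t) ^ p) ^ (1 / p) := rfl
  set B := ∫⁻ t in Set.Ioi (0:ℝ), (FF f t / ENNReal.ofReal t) ^ p with hB
  -- B ≤ A
  have hBA : B ≤ A := by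
    refine lintegral_mono_ae ((ae_restrict_mem measurableSet_Ioi).mono fun t ht => ?_)
    exact ENNReal.rpow_le_rpow (ENNReal.div_le_div_right (FF_le_K f ht) _) hp0.le
  -- A = ∫ HH^p
  have hAH : A = ∫⁻ t in Set.Ioi (0:ℝ), (HH f t) ^ p := by
    refine setLIntegral_congr_fun measurableSet_Ioi (fun t ht => ?_)
    rw [K_eq f hf ht, div_eq_mul_inv, mul_comm (ENNReal.ofReal t), mul_assoc,
      ENNReal.mul_inv_cancel (ENNReal.ofReal_pos.mpr ht).ne' ENNReal.ofReal_ne_top, mul_one]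
  have hAB : A ≤ (ENNReal.ofReal p) ^ p * B := by
    rw [hAH]; exact hardy f hp
  refine ⟨?_, ?_, ?_⟩
  · rw [hces]
    exact ENNReal.rpow_le_rpow hBA (by positivity)
  · rw [hces]
    calc A ^ (1/p) ≤ ((ENNReal.ofReal p) ^ p * B) ^ (1/p) :=
          ENNReal.rpow_le_rpow hAB (by positivity)
      _ = ENNReal.ofReal p * B ^ (1/p) := by
          rw [ENNReal.mul_rpow_of_nonneg _ _ (by positivity), ← ENNReal.rpow_mul,
            show p * (1/p) = 1 by field_simp, ENNReal.rpow_one]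
  · simp only [hFdef]
    constructor
    · intro hAlt
      exact lt_of_le_of_lt hBA hAlt
    · intro hBlt
      refine lt_of_le_of_lt hAB ?_
      exact ENNReal.mul_lt_top (ENNReal.rpow_ne_top_of_nonneg hp0.le ENNReal.ofReal_ne_top).lt_top
        hBlt
end

section
/- Let a = (a_j)_{j≥1} be a sequence of nonnegative reals with ∑_{j=1}^∞ a_j/j < ∞. Then for every n ≥ 1, (C_d(C*_d a))_n = (C_d a)_n + (C*_d a)_{n+1}; equivalently, the Bennett identity C_d = (C_d − S*) C*_d holds, where (S* x)_n = x_{n+1}. -/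
open Finset

/-- The discrete Cesàro operator `(C_d a)_n = (1/n) ∑_{k=1}^n a_k`. -/
noncomputable def cesD (a : ℕ → ℝ) (n : ℕ) : ℝ :=
  (1 / (n : ℝ)) * ∑ k ∈ Finset.Icc 1 n, a k

/-- The discrete Copson operator `(C*_d a)_n = ∑_{k=n}^∞ a_k/k`. -/
noncomputable def copD (a : ℕ → ℝ) (n : ℕ) : ℝ :=
  ∑' k : ℕ, a (n + k) / ((n + k : ℕ) : ℝ)

/-- For a nonnegative sequence `a = (a_j)_{j≥1}` with `∑_{j=1}^∞ a_j/j < ∞` and every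
`n ≥ 1`: `(C_d(C*_d a))_n = (C_d a)_n + (C*_d a)_{n+1}`, i.e. Bennett's identity
`C_d = (C_d − S*) C*_d`. -/
theorem stmt15 (a : ℕ → ℝ) (ha : ∀ j, 0 ≤ a j)
    (hsum : Summable (fun j : ℕ => a j / (j : ℝ)))
    (n : ℕ) (hn : 1 ≤ n) :
    cesD (copD a) n = cesD a n + copD a (n + 1) := by
  have key : ∀ k, k ≤ n + 1 →
      copD a k = (∑ j ∈ Icc k n, a j / (j : ℝ)) + copD a (n + 1) := by
    intro k hk
    have hg : Summable (fun i : ℕ => a (k + i) / ((k + i : ℕ) : ℝ)) := by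
      exact hsum.comp_injective (add_right_injective k)
    have h1 := (Summable.sum_add_tsum_nat_add
      (f := fun i : ℕ => a (k + i) / ((k + i : ℕ) : ℝ)) (n + 1 - k) hg).symm
    unfold copD
    rw [h1]
    congr 1
    · rw [← Finset.Ico_add_one_right_eq_Icc, Finset.sum_Ico_eq_sum_range]
    · apply tsum_congr
      intro i
      have h2 : k + (i + (n + 1 - k)) = (n + 1) + i := by omega
      rw [h2]
  unfold cesD
  have hswap : ∑ k ∈ Icc 1 n, ∑ j ∈ Icc k n, a j / (j : ℝ)
      = ∑ j ∈ Icc 1 n, ∑ _k ∈ Icc 1 j, a j / (j : ℝ) := by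
    apply Finset.sum_comm'
    intro x y
    simp only [mem_Icc]
    omega
  have hsum2 : ∑ k ∈ Icc 1 n, copD a k
      = (∑ j ∈ Icc 1 n, a j) + (n : ℝ) * copD a (n + 1) := by
    rw [Finset.sum_congr rfl (fun k hk => key k (by simp [mem_Icc] at hk; omega)),
      Finset.sum_add_distrib, hswap, Finset.sum_const, Nat.card_Icc]
    congr 1
    · apply Finset.sum_congr rfl
      intro j hj
      rw [Finset.sum_const, Nat.card_Icc]
      simp only [mem_Icc] at hj
      have hj0 : (j : ℝ) ≠ 0 := Nat.cast_ne_zero.2 (by omega)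
      have : j + 1 - 1 = j := by omega
      rw [this, nsmul_eq_mul]
      field_simp
    · simp
  rw [hsum2]
  have hn0 : (n : ℝ) ≠ 0 := Nat.cast_ne_zero.2 (by omega)
  field_simp
end

section
/- Let f : (0,∞) → [0,∞) be defined by f(x) = 1/(x · (ln(1/x))^3) for x ∈ (0, 1/e) and f(x) = 0 for x ≥ 1/e. Then: (i) ∫_0^∞ f(x) dx = 1/2 (so f ∈ L^1(0,∞)); (ii) Cf(x) = 1/(2x (ln x)^2) for x ∈ (0, 1/e] and Cf(x) = 1/(2x) for x > 1/e; (iii) esssup_{x>0} Cf(x) = ∞, i.e., Cf ∉ L^∞(0,∞); and (iv) Cf can be written as g₀ + g₁ with g₀ ∈ L^1(0,∞) and g₁ ∈ L^∞(0,∞) (e.g. g₀ = Cf·χ_{(0,1/e]}, g₁ = Cf·χ_{(1/e,∞)}). In particular f belongs to C(L^1 + L^∞)(0,∞) but not to C(L^∞)(0,∞), so C(L^1) + C(L^∞) = C(L^∞) ⊊ C(L^1 + L^∞) on [0,∞). -/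
open MeasureTheory Set Filter

/-- `f(x) = 1/(x·(ln(1/x))³)` for `x ∈ (0, 1/e)` and `f(x) = 0` otherwise. -/
noncomputable def f19 : ℝ → ℝ := fun x =>
  if x ∈ Set.Ioo 0 (Real.exp (-1)) then 1 / (x * Real.log (1 / x) ^ 3) else 0

/-- The Cesàro transform of `f19`: `Cf(x) = (1/x)∫_0^x f(t) dt`, in `[0,∞]`. -/
noncomputable def cesF19 : ℝ → ENNReal := fun x =>
  (∫⁻ t in Set.Ioo 0 x, ENNReal.ofReal (f19 t)) / ENNReal.ofReal x

/-- Improper FTC at `0` for lower Lebesgue integrals on `(0,b)`. -/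
private lemma lint_helper (f g F : ℝ → ℝ) {b : ℝ} (hb : 0 < b) (hb1 : b < 1)
    (heq : ∀ t ∈ Ioo (0:ℝ) b, f t = g t)
    (hderiv : ∀ t ∈ Ioo (0:ℝ) 1, HasDerivAt F (g t) t)
    (hgc : ContinuousOn g (Ioo 0 1))
    (hg0 : ∀ t ∈ Ioo (0:ℝ) b, 0 ≤ g t)
    (hF0 : Tendsto F (nhdsWithin 0 (Ioi 0)) (nhds 0)) :
    ∫⁻ t in Ioo (0:ℝ) b, ENNReal.ofReal (f t) = ENNReal.ofReal (F b) := by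
  set a : ℕ → ℝ := fun n => b / (n + 1) with ha
  have han : ∀ n : ℕ, 0 < a n := fun n => div_pos hb (by positivity)
  have hab : ∀ n : ℕ, a n ≤ b := fun n =>
    div_le_self hb.le (by simp [le_add_iff_nonneg_left])
  have hsub : ∀ n, Icc (a n) b ⊆ Ioo 0 1 := fun n t ht =>
    ⟨lt_of_lt_of_le (han n) ht.1, lt_of_le_of_lt ht.2 hb1⟩
  have key : ∀ n : ℕ, (∫⁻ t in Ioo (a n) b, ENNReal.ofReal (f t))
      = ENNReal.ofReal (F b - F (a n)) := by
    intro n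
    have h1 : (∫⁻ t in Ioo (a n) b, ENNReal.ofReal (f t))
        = ∫⁻ t in Ioo (a n) b, ENNReal.ofReal (g t) := by
      refine setLIntegral_congr_fun measurableSet_Ioo (fun t ht => ?_)
      rw [heq t ⟨(han n).trans ht.1, ht.2⟩]
    have hcont : ContinuousOn g (Icc (a n) b) := hgc.mono (hsub n)
    have hint : IntegrableOn g (Ioo (a n) b) volume :=
      (hcont.integrableOn_Icc).mono_set Ioo_subset_Icc_self
    have h2 : ENNReal.ofReal (∫ t in Ioo (a n) b, g t)
        = ∫⁻ t in Ioo (a n) b, ENNReal.ofReal (g t) :=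
      ofReal_integral_eq_lintegral_ofReal hint
        (ae_restrict_of_forall_mem measurableSet_Ioo fun t ht =>
          hg0 t ⟨(han n).trans ht.1, ht.2⟩)
    have h3 : (∫ t in Ioo (a n) b, g t) = F b - F (a n) := by
      rw [← MeasureTheory.integral_Ioc_eq_integral_Ioo,
        ← intervalIntegral.integral_of_le (hab n)]
      refine intervalIntegral.integral_eq_sub_of_hasDerivAt (fun t ht => ?_)
        (hcont.intervalIntegrable_of_Icc (hab n))
      exact hderiv t (hsub n ((uIcc_of_le (hab n)) ▸ ht))
    rw [h1, ← h2, h3]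
  have hmono : Monotone fun n : ℕ => Ioo (a n) b := by
    intro m n hmn
    refine Ioo_subset_Ioo_left (div_le_div_of_nonneg_left hb.le (by positivity) ?_)
    exact_mod_cast add_le_add_left (Nat.cast_le.2 hmn) 1
  have hunion : (⋃ n, Ioo (a n) b) = Ioo 0 b := by
    refine Subset.antisymm (iUnion_subset fun n => Ioo_subset_Ioo_left (han n).le) ?_
    intro t ht
    obtain ⟨n, hn⟩ := exists_nat_gt (b / t)
    refine mem_iUnion.2 ⟨n, ?_, ht.2⟩
    rw [ha]
    rw [div_lt_iff₀ (by positivity)]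
    rw [div_lt_iff₀ ht.1] at hn
    nlinarith [ht.1]
  have hmono2 : Monotone fun n => ∫⁻ t in Ioo (a n) b, ENNReal.ofReal (f t) :=
    fun m n h => lintegral_mono_set (hmono h)
  have haten : Tendsto a atTop (nhdsWithin 0 (Ioi 0)) := by
    refine tendsto_nhdsWithin_of_tendsto_nhds_of_eventually_within _ ?_
      (Eventually.of_forall han)
    have : Tendsto (fun n : ℕ => (n : ℝ) + 1) atTop atTop :=
      tendsto_atTop_add_const_right _ 1 tendsto_natCast_atTop_atTop
    simpa [ha] using this.const_div_atTop b
  have htend : Tendsto (fun n => ∫⁻ t in Ioo (a n) b, ENNReal.ofReal (f t)) atTop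
      (nhds (ENNReal.ofReal (F b))) := by
    simp only [key]
    have : Tendsto (fun n => F b - F (a n)) atTop (nhds (F b - 0)) :=
      tendsto_const_nhds.sub (hF0.comp haten)
    rw [sub_zero] at this
    exact (ENNReal.continuous_ofReal.tendsto _).comp this
  rw [← hunion, setLIntegral_iUnion_of_directed _ hmono.directed_le]
  exact iSup_eq_of_tendsto hmono2 htend

private lemma hasDeriv1 : ∀ t ∈ Ioo (0:ℝ) 1,
    HasDerivAt (fun t => 1 / (2 * Real.log t ^ 2)) (1 / (t * Real.log (1 / t) ^ 3)) t := by
  intro t ht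
  have ht0 : (0:ℝ) < t := ht.1
  have hl : Real.log t < 0 := Real.log_neg ht0 ht.2
  have hl' : Real.log t ≠ 0 := hl.ne
  have h1 : HasDerivAt Real.log t⁻¹ t := Real.hasDerivAt_log ht0.ne'
  have h2 : HasDerivAt (fun t => Real.log t ^ 2) (2 * Real.log t ^ 1 * t⁻¹) t := by
    exact_mod_cast h1.pow 2
  have h3 := h2.const_mul (2:ℝ)
  have h4 := h3.inv (by positivity)
  have heq : (1 : ℝ) / (t * Real.log (1 / t) ^ 3)
      = -(2 * (2 * Real.log t ^ 1 * t⁻¹)) / (2 * Real.log t ^ 2) ^ 2 := by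
    have ht' : t ≠ 0 := ht0.ne'
    rw [show (1:ℝ)/t = t⁻¹ from one_div t, Real.log_inv, pow_one]
    rw [div_eq_div_iff (mul_ne_zero ht' (pow_ne_zero 3 (neg_ne_zero.2 hl')))
      (by positivity)]
    field_simp
  have hfun : (fun t : ℝ => 1 / (2 * Real.log t ^ 2))
      = fun y : ℝ => (2 * Real.log y ^ 2)⁻¹ := by
    funext y; rw [one_div]
  rw [hfun, heq]
  exact h4

private lemma hasDeriv2 : ∀ t ∈ Ioo (0:ℝ) 1,
    HasDerivAt (fun t => -(1 / (2 * Real.log t))) (1 / (2 * t * Real.log t ^ 2)) t := by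
  intro t ht
  have ht0 : (0:ℝ) < t := ht.1
  have hl : Real.log t < 0 := Real.log_neg ht0 ht.2
  have hl' : Real.log t ≠ 0 := hl.ne
  have h1 : HasDerivAt Real.log t⁻¹ t := Real.hasDerivAt_log ht0.ne'
  have h3 := h1.const_mul (2:ℝ)
  have h4 := (h3.inv (by positivity)).neg
  have heq : (1 : ℝ) / (2 * t * Real.log t ^ 2)
      = -(-(2 * t⁻¹) / (2 * Real.log t) ^ 2) := by
    field_simp
  have hfun : (fun t : ℝ => -(1 / (2 * Real.log t)))
      = fun y : ℝ => -(2 * Real.log y)⁻¹ := by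
    funext y; rw [one_div]
  rw [hfun, heq]
  exact h4

private lemma cont1 : ContinuousOn (fun t : ℝ => 1 / (t * Real.log (1 / t) ^ 3)) (Ioo 0 1) := by
  refine continuousOn_const.div ?_ ?_
  · refine continuousOn_id.mul (ContinuousOn.pow ?_ 3)
    refine ContinuousOn.log ?_ (fun x hx => by have := hx.1; positivity)
    exact continuousOn_const.div continuousOn_id (fun x hx => hx.1.ne')
  · intro x hx
    have hlog : 0 < Real.log (1 / x) := Real.log_pos (one_lt_one_div hx.1 hx.2)
    have := hx.1
    positivity

private lemma cont2 : ContinuousOn (fun t : ℝ => 1 / (2 * t * Real.log t ^ 2)) (Ioo 0 1) := by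
  refine continuousOn_const.div ?_ ?_
  · exact (continuousOn_const.mul continuousOn_id).mul
      ((Real.continuousOn_log.mono (fun x hx => hx.1.ne')).pow 2)
  · intro x hx
    have hl : Real.log x < 0 := Real.log_neg hx.1 hx.2
    have hl' : Real.log x ≠ 0 := hl.ne
    have := hx.1
    positivity

private lemma tendF1 : Tendsto (fun t : ℝ => 1 / (2 * Real.log t ^ 2))
    (nhdsWithin 0 (Ioi 0)) (nhds 0) := by
  have h := Real.tendsto_log_nhdsGT_zero
  have h2 : Tendsto (fun t : ℝ => 2 * Real.log t ^ 2) (nhdsWithin 0 (Ioi 0)) atTop := by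
    refine Tendsto.const_mul_atTop two_pos ?_
    have := h.atBot_mul_atBot₀ h
    refine this.congr fun t => by ring
  refine (tendsto_inv_atTop_zero.comp h2).congr fun t => ?_
  simp only [Function.comp_apply, one_div]

private lemma tendF2 : Tendsto (fun t : ℝ => -(1 / (2 * Real.log t)))
    (nhdsWithin 0 (Ioi 0)) (nhds 0) := by
  have h := Real.tendsto_log_nhdsGT_zero
  have h2 : Tendsto (fun t : ℝ => -(2 * Real.log t)) (nhdsWithin 0 (Ioi 0)) atTop := by
    refine tendsto_neg_atBot_atTop.comp ?_
    exact Tendsto.const_mul_atBot two_pos h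
  have h3 := tendsto_inv_atTop_zero.comp h2
  refine h3.congr fun t => ?_
  simp only [Function.comp_apply, inv_neg, one_div]

private lemma tend2x : Tendsto (fun x : ℝ => 2 * x * Real.log x ^ 2)
    (nhdsWithin 0 (Ioi 0)) (nhds 0) := by
  have h := tendsto_log_mul_rpow_nhdsGT_zero (r := (1/2 : ℝ)) (by norm_num)
  have h2 := (h.mul h).const_mul (2:ℝ)
  rw [mul_zero, mul_zero] at h2
  refine h2.congr' ?_
  filter_upwards [self_mem_nhdsWithin] with x (hx : (0:ℝ) < x)
  have : x ^ (1/2:ℝ) * x ^ (1/2:ℝ) = x := by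
    rw [← Real.rpow_add hx]; norm_num
  calc 2 * (Real.log x * x ^ (1/2:ℝ) * (Real.log x * x ^ (1/2:ℝ)))
      = 2 * (x ^ (1/2:ℝ) * x ^ (1/2:ℝ)) * Real.log x ^ 2 := by ring
    _ = 2 * x * Real.log x ^ 2 := by rw [this]

/-- For `f(x) = 1/(x(ln(1/x))³)·χ_{(0,1/e)}(x)`:
(i) `∫_0^∞ f = 1/2`, so `f ∈ L^1(0,∞)`;
(ii) `Cf(x) = 1/(2x(ln x)²)` for `x ∈ (0,1/e]` and `Cf(x) = 1/(2x)` for `x > 1/e`;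
(iii) `esssup_{x>0} Cf(x) = ∞`, i.e. `Cf ∉ L^∞(0,∞)`;
(iv) `Cf = g₀ + g₁` on `(0,∞)` with `g₀ ∈ L^1(0,∞)` and `g₁ ∈ L^∞(0,∞)`.
Hence `f ∈ C(L^1 + L^∞)(0,∞)` but `f ∉ C(L^∞)(0,∞)`. -/
theorem stmt19 :
    (∫⁻ x in Set.Ioi (0:ℝ), ENNReal.ofReal (f19 x)) = ENNReal.ofReal (1 / 2) ∧
    (∀ x ∈ Set.Ioc (0:ℝ) (Real.exp (-1)),
      cesF19 x = ENNReal.ofReal (1 / (2 * x * Real.log x ^ 2))) ∧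
    (∀ x : ℝ, Real.exp (-1) < x → cesF19 x = ENNReal.ofReal (1 / (2 * x))) ∧
    essSup cesF19 (MeasureTheory.volume.restrict (Set.Ioi (0:ℝ))) = ⊤ ∧
    ∃ g₀ g₁ : ℝ → ENNReal,
      (∀ x ∈ Set.Ioi (0:ℝ), cesF19 x = g₀ x + g₁ x) ∧
      (∫⁻ x in Set.Ioi (0:ℝ), g₀ x) < ⊤ ∧
      ∃ M : ℝ, 0 ≤ M ∧ ∀ x ∈ Set.Ioi (0:ℝ), g₁ x ≤ ENNReal.ofReal M := by
  set b : ℝ := Real.exp (-1) with hbdef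
  have hb : 0 < b := Real.exp_pos _
  have hb1 : b < 1 := Real.exp_lt_one_iff.mpr (by norm_num)
  have hlogb : Real.log b = -1 := Real.log_exp _
  -- core: for 0 < x ≤ b, ∫⁻ over Ioo 0 x of f19 = 1/(2 (log x)^2)
  have lemA : ∀ x : ℝ, 0 < x → x ≤ b →
      (∫⁻ t in Ioo (0:ℝ) x, ENNReal.ofReal (f19 t))
        = ENNReal.ofReal (1 / (2 * Real.log x ^ 2)) := by
    intro x hx hxb
    have hx1 : x < 1 := lt_of_le_of_lt hxb hb1
    refine lint_helper f19 (fun t => 1 / (t * Real.log (1 / t) ^ 3))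
      (fun t => 1 / (2 * Real.log t ^ 2)) hx hx1 ?_ hasDeriv1 cont1 ?_ tendF1
    · intro t ht
      have : t ∈ Set.Ioo 0 b := ⟨ht.1, lt_of_lt_of_le ht.2 hxb⟩
      simp only [f19]; exact if_pos this
    · intro t ht
      have ht1 : t < 1 := lt_of_lt_of_le (lt_of_lt_of_le ht.2 hxb) hb1.le
      have hlog : 0 < Real.log (1 / t) := Real.log_pos (one_lt_one_div ht.1 ht1)
      have := ht.1
      positivity
  have hf19_zero : ∀ t : ℝ, b ≤ t → f19 t = 0 := by
    intro t htb
    simp only [f19]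
    rw [if_neg]
    rintro ⟨-, h2⟩
    exact absurd h2 (not_lt.2 htb)
  -- (i)
  have part1 : (∫⁻ x in Set.Ioi (0:ℝ), ENNReal.ofReal (f19 x)) = ENNReal.ofReal (1 / 2) := by
    rw [← Ioo_union_Ici_eq_Ioi hb,
      lintegral_union measurableSet_Ici (by
        rw [Set.disjoint_left]; intro t ht ht'; exact absurd ht' (not_le.2 ht.2))]
    have hzero : (∫⁻ t in Ici b, ENNReal.ofReal (f19 t)) = 0 := by
      rw [setLIntegral_congr_fun measurableSet_Ici
        (fun t (ht : t ∈ Ici b) => (by rw [hf19_zero t ht] : ENNReal.ofReal (f19 t) = ENNReal.ofReal 0))]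
      simp
    rw [hzero, add_zero, lemA b hb le_rfl, hlogb]
    norm_num
  -- (ii)
  have part2 : ∀ x ∈ Set.Ioc (0:ℝ) b,
      cesF19 x = ENNReal.ofReal (1 / (2 * x * Real.log x ^ 2)) := by
    intro x hx
    show (∫⁻ t in Set.Ioo 0 x, ENNReal.ofReal (f19 t)) / ENNReal.ofReal x = _
    rw [lemA x hx.1 hx.2, ← ENNReal.ofReal_div_of_pos hx.1]
    congr 1
    rw [div_div]
    ring_nf
  -- (iii): formula for x > b
  have part3 : ∀ x : ℝ, b < x → cesF19 x = ENNReal.ofReal (1 / (2 * x)) := by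
    intro x hx
    have hx0 : 0 < x := hb.trans hx
    show (∫⁻ t in Set.Ioo 0 x, ENNReal.ofReal (f19 t)) / ENNReal.ofReal x = _
    have hsplit : (∫⁻ t in Set.Ioo 0 x, ENNReal.ofReal (f19 t))
        = ENNReal.ofReal (1 / 2) := by
      rw [← Ioo_union_Ico_eq_Ioo hb hx.le,
        lintegral_union measurableSet_Ico (by
          rw [Set.disjoint_left]; intro t ht ht'; exact absurd ht'.1 (not_le.2 ht.2))]
      have hzero : (∫⁻ t in Ico b x, ENNReal.ofReal (f19 t)) = 0 := by
        rw [setLIntegral_congr_fun measurableSet_Ico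
          (fun t (ht : t ∈ Ico b x) => (by rw [hf19_zero t ht.1] : ENNReal.ofReal (f19 t) = ENNReal.ofReal 0))]
        simp
      rw [hzero, add_zero, lemA b hb le_rfl, hlogb]
      norm_num
    rw [hsplit, ← ENNReal.ofReal_div_of_pos hx0]
    congr 1
    rw [div_div]
  -- essSup = ⊤
  have part4 : essSup cesF19 (MeasureTheory.volume.restrict (Set.Ioi (0:ℝ))) = ⊤ := by
    by_contra hC
    set C := essSup cesF19 (MeasureTheory.volume.restrict (Set.Ioi (0:ℝ))) with hCdef
    have hae : ∀ᵐ x ∂(volume.restrict (Set.Ioi (0:ℝ))), cesF19 x ≤ C := ae_le_essSup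
    set R : ℝ := C.toReal + 1 with hRdef
    have hR : 0 < R := by positivity
    have hCR : C < ENNReal.ofReal R := by
      rw [← ENNReal.ofReal_toReal hC]
      exact (ENNReal.ofReal_lt_ofReal_iff (by positivity)).2 (lt_add_one _)
    have ev1 : ∀ᶠ x in nhdsWithin 0 (Ioi (0:ℝ)), 2 * x * Real.log x ^ 2 < 1 / R :=
      tend2x.eventually_lt_const (by positivity)
    have ev2 : ∀ᶠ x in nhdsWithin 0 (Ioi (0:ℝ)), x < b :=
      eventually_nhdsWithin_of_eventually_nhds (gt_mem_nhds hb)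
    obtain ⟨u, hu, hsubu⟩ := mem_nhdsGT_iff_exists_Ioo_subset.1
      ((ev1.and ev2).and self_mem_nhdsWithin)
    have hviol : ∀ x ∈ Ioo (0:ℝ) u, ¬ cesF19 x ≤ C := by
      intro x hx
      obtain ⟨⟨h1, h2⟩, (h3 : (0:ℝ) < x)⟩ := hsubu hx
      have hl : Real.log x < 0 := Real.log_neg h3 (h2.trans hb1)
      have hl' : Real.log x ≠ 0 := hl.ne
      have hpos : 0 < 2 * x * Real.log x ^ 2 := by positivity
      have hRlt : R < 1 / (2 * x * Real.log x ^ 2) := by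
        rw [lt_div_iff₀ hpos]
        calc R * (2 * x * Real.log x ^ 2) < R * (1 / R) :=
            mul_lt_mul_of_pos_left h1 hR
          _ = 1 := mul_one_div_cancel hR.ne'
      have : cesF19 x = ENNReal.ofReal (1 / (2 * x * Real.log x ^ 2)) :=
        part2 x ⟨h3, h2.le⟩
      rw [this]
      intro hle
      exact absurd (hle.trans_lt hCR) (not_lt.2 (ENNReal.ofReal_le_ofReal hRlt.le))
    have h0 : volume.restrict (Set.Ioi (0:ℝ)) {x | ¬ cesF19 x ≤ C} = 0 := by
      rw [← compl_setOf]
      exact hae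
    have hle : volume.restrict (Set.Ioi (0:ℝ)) (Ioo 0 u) ≤ 0 := by
      rw [← h0]
      exact measure_mono fun x hx => hviol x hx
    rw [Measure.restrict_apply' measurableSet_Ioi] at hle
    have hiu : Ioo (0:ℝ) u ∩ Ioi 0 = Ioo 0 u := by
      rw [inter_eq_left]; exact fun y hy => hy.1
    rw [hiu, Real.volume_Ioo, sub_zero, nonpos_iff_eq_zero] at hle
    exact absurd hle (by simp only [ENNReal.ofReal_eq_zero, not_le]; exact mem_Ioi.1 hu)
  refine ⟨part1, part2, part3, part4, ?_⟩
  -- decomposition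
  refine ⟨(Ioc (0:ℝ) b).indicator cesF19, (Ioi b).indicator cesF19, ?_, ?_, ?_⟩
  · intro x hx
    rcases le_or_gt x b with h | h
    · rw [indicator_of_mem (show x ∈ Ioc (0:ℝ) b from ⟨hx, h⟩),
        indicator_of_notMem (show x ∉ Ioi b by simpa using h), add_zero]
    · rw [indicator_of_notMem (show x ∉ Ioc (0:ℝ) b by simp [h.not_ge]),
        indicator_of_mem (show x ∈ Ioi b from h), zero_add]
  · rw [lintegral_indicator measurableSet_Ioc, Measure.restrict_restrict measurableSet_Ioc]
    have hib : Ioc (0:ℝ) b ∩ Ioi 0 = Ioc 0 b := by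
      rw [inter_eq_left]; exact fun x hx => hx.1
    rw [hib]
    have hcongr : (∫⁻ x in Ioc (0:ℝ) b, cesF19 x)
        = ∫⁻ x in Ioc (0:ℝ) b, ENNReal.ofReal (1 / (2 * x * Real.log x ^ 2)) :=
      setLIntegral_congr_fun measurableSet_Ioc
        (fun x hx => part2 x hx)
    rw [hcongr, ← setLIntegral_congr MeasureTheory.Ioo_ae_eq_Ioc]
    rw [lint_helper (fun x => 1 / (2 * x * Real.log x ^ 2))
        (fun x => 1 / (2 * x * Real.log x ^ 2)) (fun t => -(1 / (2 * Real.log t)))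
        hb hb1 (fun t _ => rfl) hasDeriv2 cont2 ?_ tendF2]
    · exact ENNReal.ofReal_lt_top
    · intro t ht
      have hl : Real.log t < 0 := Real.log_neg ht.1 (ht.2.trans hb1)
      have hl' : Real.log t ≠ 0 := hl.ne
      have := ht.1
      positivity
  · refine ⟨Real.exp 1 / 2, by positivity, ?_⟩
    intro x hx
    rcases le_or_gt x b with h | h
    · rw [indicator_of_notMem (show x ∉ Ioi b by simpa using h)]
      exact zero_le
    · rw [indicator_of_mem (show x ∈ Ioi b from h), part3 x h]
      refine ENNReal.ofReal_le_ofReal ?_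
      have hx0 : (0:ℝ) < x := hx
      have hbx : b ≤ x := h.le
      have h1 : 1 / (2 * x) ≤ 1 / (2 * b) :=
        one_div_le_one_div_of_le (by positivity) (by linarith)
      have h2 : 1 / (2 * b) = Real.exp 1 / 2 := by
        rw [hbdef, Real.exp_neg]
        field_simp
      linarith [h1, h2.le]
end
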